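/- arXiv:2406.09243 — 5 statements merged into one kernel-verified Lean document; each statement's English description precedes it below -/
import Mathlib

section
/- Let r ≥ 2 and let b : ℕ^r → ℂ be a bounded function. Then for all N ≥ 1 and all 1 ≤ D ≤ N, (1/N^r) ∑_{m ∈ [N]^r, gcd(m)=1} b(m) = ∑_{d=1}^{D} (μ(d)/d^r) · 𝔼_{m ∈ [N/d]^r} b(d·m) + O(1/D^{r-1}) + O((log N)/N), where the implied constants depend only on b. -/
open Filter Finset Real ArithmeticFunction
open scoped ArithmeticFunction.Moebius

/-- The box `[a]^r` of lattice points with coordinates in `{1, …, a}`. -/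
def box (r a : ℕ) : Finset (Fin r → ℕ) := Fintype.piFinset fun _ => Finset.Icc 1 a


lemma mem_box' {r a : ℕ} {m : Fin r → ℕ} : m ∈ box r a ↔ ∀ i, 1 ≤ m i ∧ m i ≤ a := by
  simp [_root_.box, Fintype.mem_piFinset, Finset.mem_Icc]

lemma card_box' (r a : ℕ) : (box r a).card = a ^ r := by
  simp [_root_.box, Fintype.card_piFinset, Nat.card_Icc]

lemma sum_moebius_divisors (n : ℕ) :
    ∑ d ∈ n.divisors, (μ d : ℤ) = if n = 1 then 1 else 0 := by
  have := congrArg (fun f : ArithmeticFunction ℤ => f n) moebius_mul_coe_zeta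
  simp only [coe_mul_zeta_apply, one_apply] at this
  exact this

lemma sum_box_dvd (r N d : ℕ) (hd : 1 ≤ d) (b : (Fin r → ℕ) → ℂ) :
    ∑ m ∈ (box r N).filter (fun m => ∀ i, d ∣ m i), b m
      = ∑ m ∈ box r (N / d), b (fun i => d * m i) := by
  refine Finset.sum_nbij' (fun m => fun i => m i / d) (fun m => fun i => d * m i)
    ?_ ?_ ?_ ?_ ?_
  · intro m hm
    simp only [Finset.mem_filter, mem_box'] at hm
    obtain ⟨hm1, hm2⟩ := hm
    rw [mem_box']
    intro i
    constructor
    · rw [Nat.one_le_div_iff (by omega)]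
      exact Nat.le_of_dvd (hm1 i).1 (hm2 i)
    · exact Nat.div_le_div_right (hm1 i).2
  · intro m hm
    rw [mem_box'] at hm
    refine Finset.mem_filter.2 ⟨mem_box'.2 fun i => ?_, fun i => Dvd.intro _ rfl⟩
    constructor
    · nlinarith [(hm i).1, hd]
    · calc d * m i ≤ d * (N / d) := Nat.mul_le_mul_left d (hm i).2
        _ ≤ N := Nat.mul_div_le N d
  · intro m hm
    simp only [Finset.mem_filter, mem_box'] at hm
    funext i
    exact Nat.mul_div_cancel' (hm.2 i)
  · intro m hm
    funext i
    exact Nat.mul_div_cancel_left _ (by omega)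
  · intro m hm
    simp only [Finset.mem_filter, mem_box'] at hm
    congr 1
    funext i
    exact (Nat.mul_div_cancel' (hm.2 i)).symm

lemma ident (r : ℕ) (hr : 1 ≤ r) (b : (Fin r → ℕ) → ℂ) (N : ℕ) :
    ∑ m ∈ (box r N).filter (fun m => Finset.univ.gcd m = 1), b m
      = ∑ d ∈ Finset.Icc 1 N, ((μ d : ℤ) : ℂ) * ∑ m ∈ box r (N / d), b (fun i => d * m i) := by
  have i0 : Fin r := ⟨0, hr⟩
  calc ∑ m ∈ (box r N).filter (fun m => Finset.univ.gcd m = 1), b m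
      = ∑ m ∈ box r N, if Finset.univ.gcd m = 1 then b m else 0 := by
        rw [Finset.sum_filter]
    _ = ∑ m ∈ box r N, ∑ d ∈ Finset.Icc 1 N,
          (if d ∣ Finset.univ.gcd m then ((μ d : ℤ) : ℂ) * b m else 0) := by
        refine Finset.sum_congr rfl fun m hm => ?_
        rw [mem_box'] at hm
        set g := Finset.univ.gcd m with hg
        have hgdvd : g ∣ m i0 := Finset.gcd_dvd (Finset.mem_univ i0)
        have hm0 : 1 ≤ m i0 := (hm i0).1
        have hgpos : 0 < g := Nat.pos_of_dvd_of_pos hgdvd hm0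
        have hgN : g ≤ N := le_trans (Nat.le_of_dvd hm0 hgdvd) (hm i0).2
        have hdiv : g.divisors = (Finset.Icc 1 N).filter (fun d => d ∣ g) := by
          ext d
          simp only [Nat.mem_divisors, Finset.mem_filter, Finset.mem_Icc]
          constructor
          · rintro ⟨hdg, -⟩
            exact ⟨⟨Nat.pos_of_dvd_of_pos hdg hgpos, le_trans (Nat.le_of_dvd hgpos hdg) hgN⟩, hdg⟩
          · rintro ⟨-, hdg⟩
            exact ⟨hdg, by omega⟩
        have key : ((if g = 1 then (1:ℤ) else 0 : ℤ) : ℂ) * b m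
            = ∑ d ∈ Finset.Icc 1 N, (if d ∣ g then ((μ d : ℤ) : ℂ) * b m else 0) := by
          rw [← sum_moebius_divisors, hdiv, Finset.sum_filter]
          push_cast
          rw [Finset.sum_mul]
          refine Finset.sum_congr rfl fun d hd => ?_
          split <;> simp
        rw [← key]
        split <;> simp
    _ = ∑ d ∈ Finset.Icc 1 N, ∑ m ∈ box r N,
          (if d ∣ Finset.univ.gcd m then ((μ d : ℤ) : ℂ) * b m else 0) := Finset.sum_comm
    _ = ∑ d ∈ Finset.Icc 1 N, ((μ d : ℤ) : ℂ) * ∑ m ∈ box r (N / d), b (fun i => d * m i) := by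
        refine Finset.sum_congr rfl fun d hd => ?_
        rw [Finset.mem_Icc] at hd
        have hfil : (box r N).filter (fun m => d ∣ Finset.univ.gcd m)
            = (box r N).filter (fun m => ∀ i, d ∣ m i) := by
          refine Finset.filter_congr fun m hm => ?_
          simp [Finset.dvd_gcd_iff]
        rw [← Finset.sum_filter, hfil, ← sum_box_dvd r N d hd.1 b, Finset.mul_sum]


lemma nat_key (r : ℕ) (hr : 2 ≤ r) (n : ℕ) : n ^ (r - 1) * (n + 2) ≤ (n + 1) ^ r := by
  induction r with
  | zero => omega
  | succ r ih =>
    rcases Nat.lt_or_ge r 2 with h | h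
    · interval_cases r
      · exact absurd hr (by omega)
      · show n ^ 1 * (n + 2) ≤ (n + 1) ^ 2
        nlinarith
    · have h1 : 1 ≤ r := by omega
      have e : n ^ (r + 1 - 1) * (n + 2) = n * (n ^ (r - 1) * (n + 2)) := by
        rw [show r + 1 - 1 = (r - 1) + 1 by omega, pow_succ]
        ring
      rw [e]
      calc n * (n ^ (r - 1) * (n + 2)) ≤ n * (n + 1) ^ r := Nat.mul_le_mul_left n (ih h)
        _ ≤ (n + 1) * (n + 1) ^ r := Nat.mul_le_mul_right _ (by omega)
        _ = (n + 1) ^ (r + 1) := by ring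

lemma real_step (r : ℕ) (hr : 2 ≤ r) (n : ℕ) (hn : 1 ≤ n) :
    (1 : ℝ) / ((n : ℝ) + 1) ^ r ≤ 1 / (n : ℝ) ^ (r - 1) - 1 / ((n : ℝ) + 1) ^ (r - 1) := by
  have hn0 : (0:ℝ) < n := by exact_mod_cast hn
  have hn1 : (0:ℝ) < (n : ℝ) + 1 := by linarith
  have hp1 : (0:ℝ) < (n : ℝ) ^ (r - 1) := by positivity
  have hp2 : (0:ℝ) < ((n : ℝ) + 1) ^ r := by positivity
  have hpow : ((n : ℝ) + 1) ^ r = ((n : ℝ) + 1) ^ (r - 1) * ((n : ℝ) + 1) := by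
    rw [← pow_succ]; congr 1; omega
  have h2 : 1 / ((n : ℝ) + 1) ^ (r - 1) = ((n : ℝ) + 1) / ((n : ℝ) + 1) ^ r := by
    rw [hpow]; field_simp
  have key : ((n : ℝ) + 2) / ((n : ℝ) + 1) ^ r ≤ 1 / (n : ℝ) ^ (r - 1) := by
    rw [div_le_div_iff₀ hp2 hp1]
    have h3 := nat_key r hr n
    have h4 : ((n ^ (r - 1) * (n + 2) : ℕ) : ℝ) ≤ (((n + 1) ^ r : ℕ) : ℝ) := by exact_mod_cast h3
    push_cast at h4
    nlinarith
  have e : (1:ℝ) / ((n : ℝ) + 1) ^ r + 1 / ((n : ℝ) + 1) ^ (r - 1)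
      = ((n : ℝ) + 2) / ((n : ℝ) + 1) ^ r := by
    rw [h2]; field_simp; ring
  linarith [key, e]

lemma tail_sum (r : ℕ) (hr : 2 ≤ r) (D : ℕ) (hD : 1 ≤ D) :
    ∀ N, D ≤ N → ∑ d ∈ Finset.Ioc D N, (1 : ℝ) / (d : ℝ) ^ r ≤ 1 / (D : ℝ) ^ (r - 1) := by
  have key : ∀ N, D ≤ N → ∑ d ∈ Finset.Ioc D N, (1 : ℝ) / (d : ℝ) ^ r
      ≤ 1 / (D : ℝ) ^ (r - 1) - 1 / (N : ℝ) ^ (r - 1) := by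
    intro N
    induction N with
    | zero => intro h; omega
    | succ n ih =>
      intro h
      rcases Nat.lt_or_ge n D with h1 | h1
      · have he : D = n + 1 := by omega
        subst he
        simp
      · rw [Finset.sum_Ioc_succ_top h1]
        have step := real_step r hr n (by omega)
        have ihh := ih h1
        push_cast
        push_cast at ihh step
        linarith
  intro N hN
  have h1 : (0:ℝ) ≤ 1 / (N : ℝ) ^ (r - 1) := by positivity
  linarith [key N hN]

lemma pow_diff_le (x y : ℝ) (hx : 0 ≤ x) (hxy : x ≤ y) :
    ∀ n : ℕ, y ^ (n + 1) - x ^ (n + 1) ≤ (n + 1 : ℝ) * y ^ n * (y - x) := by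
  intro n
  induction n with
  | zero => simp
  | succ n ih =>
    push_cast
    have hy : 0 ≤ y := le_trans hx hxy
    have hxn : x ^ (n + 1) ≤ y ^ (n + 1) := pow_le_pow_left₀ hx hxy _
    have hxn' : 0 ≤ x ^ (n + 1) := pow_nonneg hx _
    have hyn : 0 ≤ y ^ n := pow_nonneg hy _
    calc y ^ (n + 1 + 1) - x ^ (n + 1 + 1)
        = y * (y ^ (n + 1) - x ^ (n + 1)) + (y - x) * x ^ (n + 1) := by ring
      _ ≤ y * ((n + 1 : ℝ) * y ^ n * (y - x)) + (y - x) * y ^ (n + 1) := by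
          have hh1 : y * (y ^ (n + 1) - x ^ (n + 1)) ≤ y * ((n + 1 : ℝ) * y ^ n * (y - x)) :=
            mul_le_mul_of_nonneg_left ih hy
          have hh2 : (y - x) * x ^ (n + 1) ≤ (y - x) * y ^ (n + 1) :=
            mul_le_mul_of_nonneg_left hxn (by linarith)
          linarith
      _ = (n + 1 + 1 : ℝ) * y ^ (n + 1) * (y - x) := by ring

lemma coef_bound (r : ℕ) (hr : 2 ≤ r) (N d : ℕ) (hd : 1 ≤ d) (hdN : d ≤ N) :
    (((N / d : ℕ) : ℝ) ^ r) * ‖(1 / (N : ℂ) ^ r) - 1 / ((d : ℂ) ^ r * ((N / d : ℕ) : ℂ) ^ r)‖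
      ≤ (r : ℝ) * (1 / (d : ℝ)) * (1 / (N : ℝ)) := by
  set a : ℝ := ((N / d : ℕ) : ℝ) with ha
  have hdp : (0:ℝ) < d := by exact_mod_cast hd
  have hNp : (0:ℝ) < N := by exact_mod_cast le_trans hd hdN
  have ha1 : (1:ℝ) ≤ a := by
    rw [ha]
    exact_mod_cast (Nat.one_le_div_iff (by omega)).mpr hdN
  have hap : (0:ℝ) < a := by linarith
  have hda : (d:ℝ) * a ≤ N := by
    rw [ha, mul_comm]
    exact_mod_cast Nat.div_mul_le_self N d
  have hub : (N:ℝ) < (d:ℝ) * a + d := by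
    have h2 : N % d < d := Nat.mod_lt _ (by omega)
    have h1 : N = d * (N / d) + N % d := (Nat.div_add_mod N d).symm
    have h3 : N < d * (N / d) + d := by omega
    rw [ha]
    exact_mod_cast h3
  have hz : (1 / (N : ℂ) ^ r) - 1 / ((d : ℂ) ^ r * ((N / d : ℕ) : ℂ) ^ r)
      = (((1 / (N : ℝ) ^ r - 1 / ((d : ℝ) ^ r * a ^ r)) : ℝ) : ℂ) := by
    rw [ha]
    push_cast
    ring
  rw [hz, Complex.norm_real, Real.norm_eq_abs]
  have hle : 1 / (N:ℝ) ^ r ≤ 1 / ((d:ℝ) ^ r * a ^ r) := by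
    apply one_div_le_one_div_of_le (by positivity)
    rw [← mul_pow]
    exact pow_le_pow_left₀ (by positivity) hda r
  rw [abs_of_nonpos (by linarith)]
  have he : a ^ r * -(1 / (N:ℝ) ^ r - 1 / ((d:ℝ) ^ r * a ^ r))
      = (1 / (d:ℝ)) ^ r - (a / (N:ℝ)) ^ r := by
    rw [div_pow, div_pow, one_pow]
    field_simp
    ring
  rw [he]
  have hxy : a / (N:ℝ) ≤ 1 / (d:ℝ) := by
    rw [div_le_div_iff₀ hNp hdp]
    nlinarith
  have hr1 : r - 1 + 1 = r := by omega
  have hpd := pow_diff_le (a / N) (1 / (d:ℝ)) (by positivity) hxy (r - 1)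
  rw [hr1] at hpd
  have hc : ((r - 1 : ℕ) : ℝ) + 1 = (r : ℝ) := by
    rw [Nat.cast_sub (by omega)]
    push_cast
    ring
  rw [hc] at hpd
  have hpow_le : (1 / (d:ℝ)) ^ (r - 1) ≤ 1 / (d:ℝ) := by
    have h1 : (1 / (d:ℝ)) ≤ 1 := by
      rw [div_le_one hdp]
      exact_mod_cast hd
    calc (1 / (d:ℝ)) ^ (r - 1) ≤ (1 / (d:ℝ)) ^ 1 :=
          pow_le_pow_of_le_one (by positivity) h1 (by omega)
      _ = 1 / (d:ℝ) := pow_one _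
  have hsub : 1 / (d:ℝ) - a / N ≤ 1 / (N:ℝ) := by
    rw [div_sub_div _ _ (ne_of_gt hdp) (ne_of_gt hNp), div_le_div_iff₀ (by positivity) hNp]
    nlinarith
  calc (1 / (d:ℝ)) ^ r - (a / (N:ℝ)) ^ r ≤ (r : ℝ) * (1 / (d:ℝ)) ^ (r - 1) * (1 / (d:ℝ) - a / N) :=
        hpd
    _ ≤ (r : ℝ) * (1 / (d:ℝ)) * (1 / (N:ℝ)) := by
        apply mul_le_mul
        · exact mul_le_mul le_rfl hpow_le (by positivity) (by positivity)
        · exact hsub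
        · linarith [hxy]
        · positivity

theorem stmt1 (r : ℕ) (hr : 2 ≤ r) (b : (Fin r → ℕ) → ℂ) (B : ℝ)
    (hb : ∀ m, ‖b m‖ ≤ B) :
    ∃ C : ℝ, ∀ N D : ℕ, 1 ≤ N → 1 ≤ D → D ≤ N →
      ‖(1 / (N : ℂ) ^ r) *
          (∑ m ∈ (box r N).filter (fun m => Finset.univ.gcd m = 1), b m) -
        ∑ d ∈ Finset.Icc 1 D, ((moebius d : ℤ) : ℂ) / (d : ℂ) ^ r *
          ((∑ m ∈ box r (N / d), b (fun i => d * m i)) / ((box r (N / d)).card : ℂ))‖ ≤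
      C * (1 / (D : ℝ) ^ (r - 1)) + C * (Real.log N / N) := by
  have hB0 : 0 ≤ B := le_trans (norm_nonneg _) (hb fun _ => 1)
  have hmu : ∀ d : ℕ, ‖((μ d : ℤ) : ℂ)‖ ≤ 1 := by
    intro d
    rcases eq_or_ne (μ d) 0 with h | h
    · simp [h]
    · rcases moebius_ne_zero_iff_eq_or.mp h with h' | h' <;> simp [h']
  refine ⟨3 * r * B + r * B + B, ?_⟩
  intro N D hN hD hDN
  have hNp : (0:ℝ) < N := by exact_mod_cast hN
  have hDp : (0:ℝ) < D := by exact_mod_cast hD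
  have hF : ∀ d : ℕ, ‖∑ m ∈ box r (N / d), b (fun i => d * m i)‖ ≤ ((N / d : ℕ) : ℝ) ^ r * B := by
    intro d
    calc ‖∑ m ∈ box r (N / d), b (fun i => d * m i)‖
        ≤ ∑ m ∈ box r (N / d), B := norm_sum_le_of_le _ fun m _ => hb _
      _ = ((N / d : ℕ) : ℝ) ^ r * B := by
          rw [Finset.sum_const, card_box', nsmul_eq_mul]
          push_cast
          ring
  rw [ident r (by omega) b N]
  simp only [card_box', Nat.cast_pow]
  have hsplit : Finset.Icc 1 N = Finset.Icc 1 D ∪ Finset.Ioc D N := by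
    ext x
    simp only [Finset.mem_Icc, Finset.mem_Ioc, Finset.mem_union]
    omega
  have hdisj : Disjoint (Finset.Icc 1 D) (Finset.Ioc D N) := by
    rw [Finset.disjoint_left]
    intro x hx hx'
    simp only [Finset.mem_Icc] at hx
    simp only [Finset.mem_Ioc] at hx'
    omega
  rw [hsplit, Finset.sum_union hdisj, mul_add, Finset.mul_sum, Finset.mul_sum,
    add_sub_right_comm, ← Finset.sum_sub_distrib]
  -- bound the two sums
  have main_bd : ∀ d ∈ Finset.Icc 1 D,
      ‖(1 / (N:ℂ)^r) * (((μ d : ℤ):ℂ) * ∑ m ∈ box r (N / d), b (fun i => d * m i))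
        - ((μ d : ℤ):ℂ) / (d:ℂ)^r *
            ((∑ m ∈ box r (N / d), b (fun i => d * m i)) / ((N / d : ℕ):ℂ)^r)‖
      ≤ B * ((r:ℝ) * (1/(d:ℝ)) * (1/(N:ℝ))) := by
    intro d hd
    rw [Finset.mem_Icc] at hd
    have hdN : d ≤ N := le_trans hd.2 hDN
    have e : (1 / (N:ℂ)^r) * (((μ d : ℤ):ℂ) * ∑ m ∈ box r (N / d), b (fun i => d * m i))
        - ((μ d : ℤ):ℂ) / (d:ℂ)^r *
            ((∑ m ∈ box r (N / d), b (fun i => d * m i)) / ((N / d : ℕ):ℂ)^r)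
        = ((μ d : ℤ):ℂ) * (∑ m ∈ box r (N / d), b (fun i => d * m i)) *
            ((1 / (N : ℂ) ^ r) - 1 / ((d : ℂ) ^ r * ((N / d : ℕ) : ℂ) ^ r)) := by
      ring
    rw [e, norm_mul, norm_mul]
    calc ‖((μ d : ℤ):ℂ)‖ * ‖∑ m ∈ box r (N / d), b (fun i => d * m i)‖ *
          ‖(1 / (N : ℂ) ^ r) - 1 / ((d : ℂ) ^ r * ((N / d : ℕ) : ℂ) ^ r)‖
        ≤ 1 * (((N / d : ℕ) : ℝ) ^ r * B) *
          ‖(1 / (N : ℂ) ^ r) - 1 / ((d : ℂ) ^ r * ((N / d : ℕ) : ℂ) ^ r)‖ := by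
          apply mul_le_mul_of_nonneg_right _ (norm_nonneg _)
          exact mul_le_mul (hmu d) (hF d) (norm_nonneg _) zero_le_one
      _ = B * ((((N / d : ℕ) : ℝ) ^ r) *
            ‖(1 / (N : ℂ) ^ r) - 1 / ((d : ℂ) ^ r * ((N / d : ℕ) : ℂ) ^ r)‖) := by ring
      _ ≤ B * ((r:ℝ) * (1/(d:ℝ)) * (1/(N:ℝ))) :=
          mul_le_mul_of_nonneg_left (coef_bound r hr N d hd.1 hdN) hB0
  have tail_bd : ∀ d ∈ Finset.Ioc D N,
      ‖(1 / (N:ℂ)^r) * (((μ d : ℤ):ℂ) * ∑ m ∈ box r (N / d), b (fun i => d * m i))‖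
      ≤ B * (1 / (d:ℝ)^r) := by
    intro d hd
    rw [Finset.mem_Ioc] at hd
    have hd1 : 1 ≤ d := by omega
    have hdp : (0:ℝ) < d := by exact_mod_cast hd1
    have ha : ((N / d : ℕ) : ℝ) * d ≤ N := by exact_mod_cast Nat.div_mul_le_self N d
    rw [norm_mul, norm_mul]
    have h1 : ‖(1 / (N:ℂ)^r)‖ = 1 / (N:ℝ)^r := by
      rw [norm_div, norm_one, norm_pow, Complex.norm_natCast]
    rw [h1]
    calc 1 / (N:ℝ)^r * (‖((μ d : ℤ):ℂ)‖ * ‖∑ m ∈ box r (N / d), b (fun i => d * m i)‖)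
        ≤ 1 / (N:ℝ)^r * (1 * (((N / d : ℕ) : ℝ) ^ r * B)) := by
          apply mul_le_mul_of_nonneg_left _ (by positivity)
          exact mul_le_mul (hmu d) (hF d) (norm_nonneg _) zero_le_one
      _ = B * ((((N / d : ℕ) : ℝ) / (N:ℝ)) ^ r) := by
          rw [div_pow]
          ring
      _ ≤ B * ((1 / (d:ℝ)) ^ r) := by
          apply mul_le_mul_of_nonneg_left _ hB0
          apply pow_le_pow_left₀ (by positivity)
          rw [div_le_div_iff₀ hNp hdp]
          nlinarith
      _ = B * (1 / (d:ℝ)^r) := by rw [div_pow, one_pow]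
  have harm : ∑ d ∈ Finset.Icc 1 D, (1:ℝ)/(d:ℝ) ≤ 1 + Real.log D := by
    have h := harmonic_le_one_add_log D
    rw [harmonic_eq_sum_Icc] at h
    push_cast at h
    simpa [one_div] using h
  have S1 : ∑ d ∈ Finset.Icc 1 D,
        ‖(1 / (N:ℂ)^r) * (((μ d : ℤ):ℂ) * ∑ m ∈ box r (N / d), b (fun i => d * m i))
        - ((μ d : ℤ):ℂ) / (d:ℂ)^r *
            ((∑ m ∈ box r (N / d), b (fun i => d * m i)) / ((N / d : ℕ):ℂ)^r)‖
      ≤ B * (r:ℝ) * (1/(N:ℝ)) * (1 + Real.log N) := by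
    calc _ ≤ ∑ d ∈ Finset.Icc 1 D, B * ((r:ℝ) * (1/(d:ℝ)) * (1/(N:ℝ))) :=
          Finset.sum_le_sum main_bd
      _ = B * (r:ℝ) * (1/(N:ℝ)) * ∑ d ∈ Finset.Icc 1 D, (1:ℝ)/(d:ℝ) := by
          rw [Finset.mul_sum]
          exact Finset.sum_congr rfl fun d _ => by ring
      _ ≤ B * (r:ℝ) * (1/(N:ℝ)) * (1 + Real.log D) := by
          apply mul_le_mul_of_nonneg_left harm (by positivity)
      _ ≤ B * (r:ℝ) * (1/(N:ℝ)) * (1 + Real.log N) := by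
          apply mul_le_mul_of_nonneg_left _ (by positivity)
          have : Real.log D ≤ Real.log N := Real.log_le_log hDp (by exact_mod_cast hDN)
          linarith
  have S2 : ∑ d ∈ Finset.Ioc D N,
        ‖(1 / (N:ℂ)^r) * (((μ d : ℤ):ℂ) * ∑ m ∈ box r (N / d), b (fun i => d * m i))‖
      ≤ B * (1 / (D:ℝ)^(r-1)) := by
    calc _ ≤ ∑ d ∈ Finset.Ioc D N, B * (1 / (d:ℝ)^r) := Finset.sum_le_sum tail_bd
      _ = B * ∑ d ∈ Finset.Ioc D N, (1:ℝ) / (d:ℝ)^r := by rw [Finset.mul_sum]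
      _ ≤ B * (1 / (D:ℝ)^(r-1)) :=
          mul_le_mul_of_nonneg_left (tail_sum r hr D hD N hDN) hB0
  refine le_trans (norm_add_le _ _) ?_
  refine le_trans (add_le_add (norm_sum_le _ _) (norm_sum_le _ _)) ?_
  refine le_trans (add_le_add S1 S2) ?_
  -- final numeric bound
  have hlogN : 0 ≤ Real.log N := Real.log_nonneg (by exact_mod_cast hN)
  have hDr : (0:ℝ) < 1 / (D:ℝ)^(r-1) := by positivity
  rcases eq_or_lt_of_le hN with h1 | h1
  · -- N = 1
    have hN1 : N = 1 := h1.symm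
    have hD1 : D = 1 := by omega
    subst hN1; subst hD1
    norm_num
    nlinarith [hB0, hr]
  · -- N ≥ 2
    have hN2 : (2:ℕ) ≤ N := h1
    have hlog2 : (1/2 : ℝ) ≤ Real.log N := by
      have := Real.log_le_log (by norm_num : (0:ℝ) < 2) (by exact_mod_cast hN2 : (2:ℝ) ≤ N)
      nlinarith [Real.log_two_gt_d9]
    have hu : (0:ℝ) ≤ 1/(N:ℝ) := by positivity
    have key : B * (r:ℝ) * (1/(N:ℝ)) * (1 + Real.log N)
        ≤ (3 * r * B + r * B) * (Real.log N / N) := by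
      have hrB : (0:ℝ) ≤ (r:ℝ) * B := by positivity
      have h3 : 1 + Real.log N ≤ 3 * Real.log N := by linarith
      have h4 : B * (r:ℝ) * (1/(N:ℝ)) * (1 + Real.log N)
          ≤ B * (r:ℝ) * (1/(N:ℝ)) * (3 * Real.log N) :=
        mul_le_mul_of_nonneg_left h3 (by positivity)
      calc B * (r:ℝ) * (1/(N:ℝ)) * (1 + Real.log N)
          ≤ B * (r:ℝ) * (1/(N:ℝ)) * (3 * Real.log N) := h4
        _ = 3 * r * B * (Real.log N / N) := by ring
        _ ≤ (3 * r * B + r * B) * (Real.log N / N) := by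
            apply mul_le_mul_of_nonneg_right _ (by positivity)
            nlinarith
    have hB' : B * (1 / (D:ℝ)^(r-1)) ≤ (3 * r * B + r * B + B) * (1 / (D:ℝ)^(r-1)) := by
      apply mul_le_mul_of_nonneg_right _ (le_of_lt hDr)
      nlinarith
    have hpos : (0:ℝ) ≤ B * (Real.log N / N) := by positivity
    nlinarith [key, hB', hpos, hDr]
end

section
/- Let f : ℕ → ℝ be a bounded completely multiplicative function and let P ∈ ℤ[x,y] be a homogeneous polynomial of degree k with P(ℕ²) ⊆ ℕ. If the limit L = lim_{N→∞} 𝔼_{1≤m,n≤N} f(P(m,n)) exists, then the limit lim_{N→∞} 𝔼_{1≤m,n≤N, gcd(m,n)=1} f(P(m,n)) exists and equals (π²/6) · ∏_p (1 − f(p)^k/p²) · L, where the product runs over all primes p. -/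
open Filter Finset Real

/-- The value `P(m,n)` of an integer polynomial in two variables at natural arguments,
as a natural number. -/
noncomputable def Pval (P : MvPolynomial (Fin 2) ℤ) (m n : ℕ) : ℕ :=
  (MvPolynomial.eval ![(m : ℤ), (n : ℤ)] P).toNat

namespace Stmt3Aux

open ArithmeticFunction
open scoped ArithmeticFunction.Moebius

lemma eval_smul_hom {P : MvPolynomial (Fin 2) ℤ} {k : ℕ} (hP : P.IsHomogeneous k)
    (c : ℤ) (x : Fin 2 → ℤ) :
    MvPolynomial.eval (fun i => c * x i) P = c ^ k * MvPolynomial.eval x P := by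
  rw [MvPolynomial.eval_eq', MvPolynomial.eval_eq', Finset.mul_sum]
  refine Finset.sum_congr rfl fun d hd => ?_
  have h1 : Finsupp.weight 1 d = k := hP (MvPolynomial.mem_support_iff.mp hd)
  change Finsupp.weight (fun _ => 1) d = k at h1
  rw [← Finsupp.degree_eq_weight_one (R := ℕ)] at h1
  have h2 : ∑ i, d i = k := by
    rw [← h1, Finsupp.degree]
    exact (Finset.sum_subset (Finset.subset_univ _)
      fun i _ hni => Finsupp.notMem_support_iff.mp hni).symm
  calc MvPolynomial.coeff d P * ∏ i, (c * x i) ^ d i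
      = MvPolynomial.coeff d P * ((∏ i, c ^ d i) * ∏ i, x i ^ d i) := by
        rw [← Finset.prod_mul_distrib]; simp_rw [mul_pow]
    _ = c ^ k * (MvPolynomial.coeff d P * ∏ i, x i ^ d i) := by
        rw [Finset.prod_pow_eq_pow_sum, h2]; ring

lemma Pval_mul {P : MvPolynomial (Fin 2) ℤ} {k : ℕ} (hP : P.IsHomogeneous k)
    (hPnat : ∀ m n : ℕ, 1 ≤ m → 1 ≤ n → 0 ≤ MvPolynomial.eval ![(m : ℤ), (n : ℤ)] P)
    (d a b : ℕ) (ha : 1 ≤ a) (hb : 1 ≤ b) :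
    Pval P (d * a) (d * b) = d ^ k * Pval P a b := by
  unfold Pval
  have hfn : ![((d*a : ℕ) : ℤ), ((d*b : ℕ) : ℤ)] = fun i => (d : ℤ) * ![(a : ℤ), (b : ℤ)] i := by
    funext i; fin_cases i <;> simp
  rw [hfn, eval_smul_hom hP]
  have h0 := hPnat a b ha hb
  conv_lhs => rw [← Int.toNat_of_nonneg h0]
  rw [← Nat.cast_pow, ← Nat.cast_mul, Int.toNat_natCast]

lemma f_pow {f : ℕ → ℝ} (hf1 : f 1 = 1) (hfmul : ∀ m n, f (m * n) = f m * f n)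
    (m j : ℕ) : f (m ^ j) = f m ^ j := by
  induction j with
  | zero => simpa using hf1
  | succ j ih => rw [pow_succ, pow_succ, hfmul, ih]

lemma f_le_one {f : ℕ → ℝ} {C : ℝ} (hfb : ∀ n, |f n| ≤ C) (hf1 : f 1 = 1)
    (hfmul : ∀ m n, f (m * n) = f m * f n) (n : ℕ) : |f n| ≤ 1 := by
  by_contra h
  push_neg at h
  obtain ⟨j, hj⟩ := pow_unbounded_of_one_lt C h
  have : |f (n ^ j)| ≤ C := hfb _
  rw [f_pow hf1 hfmul, abs_pow] at this
  linarith

lemma sum_Icc_filter_dvd (N d : ℕ) (hd : 0 < d) (F : ℕ → ℝ) :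
    ∑ m ∈ (Finset.Icc 1 N).filter (fun m => d ∣ m), F m
      = ∑ a ∈ Finset.Icc 1 (N / d), F (d * a) := by
  refine Finset.sum_nbij' (fun m => m / d) (fun a => d * a) ?_ ?_ ?_ ?_ ?_
  · intro m hm
    simp only [Finset.mem_filter, Finset.mem_Icc] at hm ⊢
    obtain ⟨⟨h1, h2⟩, c, rfl⟩ := hm
    rw [Nat.mul_div_cancel_left _ hd]
    constructor
    · rcases Nat.eq_zero_or_pos c with rfl | hc
      · simp at h1
      · exact hc
    · exact Nat.le_div_iff_mul_le hd |>.mpr (by linarith [Nat.mul_comm d c])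
  · intro a ha
    simp only [Finset.mem_filter, Finset.mem_Icc] at ha ⊢
    refine ⟨⟨Nat.one_le_iff_ne_zero.mpr (Nat.mul_ne_zero (by omega) (by omega)), ?_⟩, ⟨a, rfl⟩⟩
    calc d * a ≤ d * (N / d) := Nat.mul_le_mul_left d ha.2
      _ ≤ N := Nat.mul_div_le N d
  · intro m hm
    simp only [Finset.mem_filter] at hm
    exact Nat.mul_div_cancel' hm.2
  · intro a _
    exact Nat.mul_div_cancel_left _ hd
  · intro m hm
    simp only [Finset.mem_filter] at hm
    rw [Nat.mul_div_cancel' hm.2]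

lemma moebius_sum_icc {N g : ℕ} (h1 : 1 ≤ g) (hg : g ≤ N) :
    ∑ d ∈ Finset.Icc 1 N, (if d ∣ g then ((μ d : ℤ) : ℝ) else 0)
      = if g = 1 then 1 else 0 := by
  rw [← Finset.sum_filter]
  have hset : (Finset.Icc 1 N).filter (fun d => d ∣ g) = g.divisors := by
    ext d
    simp only [Finset.mem_filter, Finset.mem_Icc, Nat.mem_divisors]
    constructor
    · rintro ⟨⟨_, _⟩, hdg⟩; exact ⟨hdg, by omega⟩
    · rintro ⟨hdg, hg0⟩
      refine ⟨⟨Nat.one_le_iff_ne_zero.mpr ?_, le_trans (Nat.le_of_dvd (by omega) hdg) hg⟩, hdg⟩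
      rintro rfl; exact hg0 (Nat.eq_zero_of_zero_dvd hdg)
  rw [hset]
  have := congrArg (fun (F : ArithmeticFunction ℤ) => F g) moebius_mul_coe_zeta
  simp only [coe_mul_zeta_apply, one_apply] at this
  rw [← Int.cast_sum]
  rw [this]
  split_ifs <;> simp

lemma key_identity (h : ℕ → ℕ → ℝ) (N : ℕ) :
    ∑ p ∈ (Finset.Icc 1 N ×ˢ Finset.Icc 1 N).filter (fun p => Nat.gcd p.1 p.2 = 1),
        h p.1 p.2
      = ∑ d ∈ Finset.Icc 1 N, ((μ d : ℤ) : ℝ) *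
          ∑ a ∈ Finset.Icc 1 (N / d), ∑ b ∈ Finset.Icc 1 (N / d), h (d * a) (d * b) := by
  rw [Finset.sum_filter]
  have step1 : ∀ p ∈ Finset.Icc 1 N ×ˢ Finset.Icc 1 N,
      (if Nat.gcd p.1 p.2 = 1 then h p.1 p.2 else 0)
        = ∑ d ∈ Finset.Icc 1 N,
            (if d ∣ p.1 ∧ d ∣ p.2 then ((μ d : ℤ) : ℝ) * h p.1 p.2 else 0) := by
    intro p hp
    simp only [Finset.mem_product, Finset.mem_Icc] at hp
    have hgcd1 : 1 ≤ Nat.gcd p.1 p.2 := Nat.one_le_iff_ne_zero.mpr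
      (Nat.gcd_ne_zero_left (by omega))
    have hgcdN : Nat.gcd p.1 p.2 ≤ N := le_trans (Nat.gcd_le_left _ (by omega)) hp.1.2
    calc (if Nat.gcd p.1 p.2 = 1 then h p.1 p.2 else 0)
        = (if Nat.gcd p.1 p.2 = 1 then (1:ℝ) else 0) * h p.1 p.2 := by split_ifs <;> simp
      _ = (∑ d ∈ Finset.Icc 1 N, (if d ∣ Nat.gcd p.1 p.2 then ((μ d : ℤ) : ℝ) else 0))
            * h p.1 p.2 := by
          rw [moebius_sum_icc hgcd1 hgcdN]
      _ = ∑ d ∈ Finset.Icc 1 N,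
            (if d ∣ p.1 ∧ d ∣ p.2 then ((μ d : ℤ) : ℝ) * h p.1 p.2 else 0) := by
          rw [Finset.sum_mul]
          refine Finset.sum_congr rfl fun d _ => ?_
          by_cases hdvd : d ∣ Nat.gcd p.1 p.2
          · rw [if_pos hdvd, if_pos (Nat.dvd_gcd_iff.mp hdvd)]
          · rw [if_neg hdvd, if_neg (fun hc => hdvd (Nat.dvd_gcd_iff.mpr hc)), zero_mul]
  rw [Finset.sum_congr rfl step1, Finset.sum_comm]
  refine Finset.sum_congr rfl fun d hd => ?_
  have hd0 : 0 < d := by simp only [Finset.mem_Icc] at hd; omega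
  rw [← Finset.sum_filter]
  have hfil : (Finset.Icc 1 N ×ˢ Finset.Icc 1 N).filter (fun p => d ∣ p.1 ∧ d ∣ p.2)
      = ((Finset.Icc 1 N).filter (fun m => d ∣ m))
          ×ˢ ((Finset.Icc 1 N).filter (fun m => d ∣ m)) := by
    rw [Finset.filter_product]
  rw [hfil, Finset.sum_product, Finset.mul_sum]
  rw [sum_Icc_filter_dvd N d hd0
    (fun m => ∑ q ∈ (Finset.Icc 1 N).filter (fun m => d ∣ m), ((μ d : ℤ) : ℝ) * h m q)]
  refine Finset.sum_congr rfl fun a _ => ?_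
  rw [sum_Icc_filter_dvd N d hd0 (fun n => ((μ d : ℤ) : ℝ) * h (d * a) n), Finset.mul_sum]

lemma nat_div_cast (N d : ℕ) (hd : 0 < d) :
    ((N / d : ℕ) : ℝ) = ((N : ℝ) - ((N % d : ℕ) : ℝ)) / d := by
  have h := Nat.div_add_mod N d
  have : (d : ℝ) * ((N / d : ℕ) : ℝ) + ((N % d : ℕ) : ℝ) = (N : ℝ) := by exact_mod_cast h
  have hd0 : (d : ℝ) ≠ 0 := Nat.cast_ne_zero.mpr hd.ne'
  field_simp
  linarith

lemma tendsto_div_ratio (d : ℕ) (hd : 0 < d) :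
    Tendsto (fun N : ℕ => ((N / d : ℕ) : ℝ) / (N : ℝ)) atTop (nhds (1 / d)) := by
  have h1 : Tendsto (fun N : ℕ => ((N % d : ℕ) : ℝ) / (N : ℝ)) atTop (nhds 0) := by
    refine squeeze_zero (fun N => by positivity) (fun N => ?_)
      (tendsto_const_div_atTop_nhds_zero_nat (d : ℝ))
    rcases Nat.eq_zero_or_pos N with rfl | hN
    · simp
    · gcongr
      exact_mod_cast (Nat.mod_lt N hd).le
  have h2 : Tendsto (fun N : ℕ => (1 - ((N % d : ℕ) : ℝ) / (N : ℝ)) / d) atTop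
      (nhds ((1 - 0) / d)) := Tendsto.div_const (tendsto_const_nhds.sub h1) d
  rw [sub_zero] at h2
  apply h2.congr'
  filter_upwards [eventually_gt_atTop 0] with N hN
  have hN0 : (N : ℝ) ≠ 0 := Nat.cast_ne_zero.mpr hN.ne'
  rw [nat_div_cast N d hd, div_div, mul_comm, ← div_div]
  congr 1
  rw [sub_div, div_self hN0]

lemma tendsto_nat_div_atTop (d : ℕ) (hd : 0 < d) :
    Tendsto (fun N : ℕ => N / d) atTop atTop :=
  tendsto_atTop_atTop.mpr fun b => ⟨b * d, fun N hN => (Nat.le_div_iff_mul_le hd).mpr hN⟩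

lemma limB (w : ℕ → ℝ) (hw0 : w 0 = 0) (hw : ∀ d, |w d| ≤ 1) (G : ℕ → ℝ)
    (hG : ∀ M : ℕ, |G M| ≤ (M : ℝ) ^ 2) (L : ℝ)
    (hGL : Tendsto (fun M : ℕ => G M / (M : ℝ) ^ 2) atTop (nhds L)) :
    Tendsto (fun N : ℕ => (∑ d ∈ Finset.Icc 1 N, w d * G (N / d)) / (N : ℝ) ^ 2) atTop
      (nhds ((∑' d : ℕ, w d / (d : ℝ) ^ 2) * L)) := by
  have hG0 : G 0 = 0 := by simpa using hG 0
  set F : ℕ → ℕ → ℝ := fun N d => w d * G (N / d) / (N : ℝ) ^ 2 with hF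
  have key : Tendsto (fun N => ∑' d : ℕ, F N d) atTop
      (nhds (∑' d : ℕ, w d / (d : ℝ) ^ 2 * L)) := by
    apply tendsto_tsum_of_dominated_convergence (bound := fun d : ℕ => ((d : ℝ) ^ 2)⁻¹)
    · have : Summable (fun d : ℕ => 1 / (d : ℝ) ^ 2) :=
        Real.summable_one_div_nat_pow.mpr one_lt_two
      simpa [one_div] using this
    · intro d
      rcases Nat.eq_zero_or_pos d with rfl | hd
      · simp [hF, hw0]
      · have hd0 : (d : ℝ) ≠ 0 := Nat.cast_ne_zero.mpr hd.ne'
        have hq : Tendsto (fun N : ℕ => G (N / d) / ((N / d : ℕ) : ℝ) ^ 2) atTop (nhds L) :=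
          hGL.comp (tendsto_nat_div_atTop d hd)
        have hr : Tendsto (fun N : ℕ => (((N / d : ℕ) : ℝ) / (N : ℝ)) ^ 2) atTop
            (nhds ((1 / d) ^ 2)) := (tendsto_div_ratio d hd).pow 2
        have hlim := (hq.mul hr).const_mul (w d)
        rw [show w d / (d : ℝ) ^ 2 * L = w d * (L * (1 / (d : ℝ)) ^ 2) by
          field_simp]
        apply hlim.congr'
        filter_upwards [eventually_ge_atTop d, eventually_gt_atTop 0] with N hNd hN0
        have hM : 1 ≤ N / d := (Nat.le_div_iff_mul_le hd).mpr (by omega)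
        have hM0 : ((N / d : ℕ) : ℝ) ≠ 0 := Nat.cast_ne_zero.mpr (by omega)
        have hN0' : (N : ℝ) ≠ 0 := Nat.cast_ne_zero.mpr hN0.ne'
        show w d * (G (N / d) / ((N / d : ℕ) : ℝ) ^ 2 * (((N / d : ℕ) : ℝ) / (N : ℝ)) ^ 2)
            = F N d
        simp only [hF]
        field_simp
    · filter_upwards [eventually_gt_atTop 0] with N hN0
      intro d
      rcases Nat.eq_zero_or_pos d with rfl | hd
      · simp [hF, hw0]
      · have hub : ((N / d : ℕ) : ℝ) * d ≤ (N : ℝ) := by exact_mod_cast Nat.div_mul_le_self N d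
        have habs : ‖F N d‖ = |w d| * |G (N / d)| / (N : ℝ) ^ 2 := by
          rw [hF, Real.norm_eq_abs, abs_div, abs_mul, abs_pow, Nat.abs_cast]
        rw [habs]
        have h1 : |w d| * |G (N / d)| ≤ ((N / d : ℕ) : ℝ) ^ 2 := by
          calc |w d| * |G (N / d)| ≤ 1 * ((N / d : ℕ) : ℝ) ^ 2 :=
                mul_le_mul (hw d) (hG _) (abs_nonneg _) zero_le_one
            _ = _ := one_mul _
        calc |w d| * |G (N / d)| / (N : ℝ) ^ 2
            ≤ ((N / d : ℕ) : ℝ) ^ 2 / (N : ℝ) ^ 2 := by gcongr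
          _ ≤ ((d : ℝ) ^ 2)⁻¹ := by
              rw [inv_eq_one_div, div_le_div_iff₀ (by positivity) (by positivity)]
              have hM0 : (0:ℝ) ≤ ((N / d : ℕ) : ℝ) := Nat.cast_nonneg _
              have hd0 : (0:ℝ) ≤ (d : ℝ) := Nat.cast_nonneg _
              nlinarith [hub, mul_le_mul hub hub
                (by positivity : (0:ℝ) ≤ ((N / d : ℕ) : ℝ) * d) (Nat.cast_nonneg N)]
  rw [tsum_mul_right] at key
  apply key.congr'
  filter_upwards [eventually_gt_atTop 0] with N hN0
  rw [tsum_eq_sum (s := Finset.Icc 1 N) ?_, Finset.sum_div]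
  intro d hd
  simp only [Finset.mem_Icc, not_and, not_le] at hd
  rcases Nat.eq_zero_or_pos d with rfl | hd1
  · simp [hF, hw0]
  · have : N < d := hd hd1
    simp [hF, Nat.div_eq_of_lt this, hG0]

lemma gsummable (g : ℕ → ℝ) (hg : ∀ n, |g n| ≤ 1 / (n : ℝ) ^ 2) :
    Summable (fun n => ‖g n‖) := by
  apply Summable.of_nonneg_of_le (fun n => norm_nonneg _) (fun n => hg n)
  exact Real.summable_one_div_nat_pow.mpr one_lt_two

lemma abs_mu_le (n : ℕ) : |((μ n : ℤ) : ℝ)| ≤ 1 := by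
  by_cases hsq : Squarefree n
  · rw [moebius_apply_of_squarefree hsq]; push_cast; rw [abs_pow]; simp
  · rw [moebius_eq_zero_of_not_squarefree hsq]; simp

lemma euler_f (f : ℕ → ℝ) (hf1 : f 1 = 1) (hfmul : ∀ m n, f (m * n) = f m * f n)
    (hfle : ∀ n, |f n| ≤ 1) (k : ℕ) :
    ∑' d : ℕ, ((μ d : ℤ) : ℝ) * f d ^ k / (d : ℝ) ^ 2
      = ∏' p : Nat.Primes, (1 - f p ^ k / (p : ℝ) ^ 2) := by
  set g : ℕ → ℝ := fun d => ((μ d : ℤ) : ℝ) * f d ^ k / (d : ℝ) ^ 2 with hg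
  have hg1 : g 1 = 1 := by simp [hg, hf1]
  have hgmul : ∀ {m n : ℕ}, Nat.Coprime m n → g (m * n) = g m * g n := by
    intro m n hmn
    simp only [hg]
    rw [isMultiplicative_moebius.map_mul_of_coprime hmn, hfmul]
    push_cast
    ring
  have hgabs : ∀ n, |g n| ≤ 1 / (n : ℝ) ^ 2 := by
    intro n
    simp only [hg, abs_div, abs_mul, abs_pow, sq_abs]
    rcases Nat.eq_zero_or_pos n with rfl | hn
    · simp
    · gcongr ?_ / _
      calc |((μ n : ℤ) : ℝ)| * |f n| ^ k ≤ 1 * 1 :=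
            mul_le_mul (abs_mu_le n) (pow_le_one₀ (abs_nonneg _) (hfle n))
              (by positivity) zero_le_one
        _ = 1 := one_mul 1
  have hsum := gsummable g hgabs
  have hg0 : g 0 = 0 := by simp [hg]
  have := EulerProduct.eulerProduct_tprod hg1 hgmul hsum hg0
  rw [← this]
  apply tprod_congr
  intro p
  have hp : (p : ℕ).Prime := p.2
  have htsum : ∑' e : ℕ, g ((p : ℕ) ^ e) = ∑ e ∈ ({0, 1} : Finset ℕ), g ((p : ℕ) ^ e) := by
    apply tsum_eq_sum
    intro e he
    simp only [Finset.mem_insert, Finset.mem_singleton] at he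
    push_neg at he
    have : μ ((p : ℕ) ^ e) = 0 := by
      rw [moebius_apply_prime_pow hp he.1, if_neg he.2]
    simp [hg, this]
  rw [htsum]
  rw [Finset.sum_insert (by simp), Finset.sum_singleton]
  simp only [hg, pow_zero, pow_one]
  rw [hf1, moebius_apply_one, moebius_apply_prime hp]
  push_cast
  rw [one_pow]
  ring

lemma moebius_tsum_val : ∑' d : ℕ, ((μ d : ℤ) : ℝ) / (d : ℝ) ^ 2 = 6 / Real.pi ^ 2 := by
  have hpi : (Real.pi : ℝ) ≠ 0 := Real.pi_ne_zero
  have h2 : (1 : ℝ) < (2 : ℂ).re := by norm_num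
  have hzeta : riemannZeta 2 = (Real.pi : ℂ) ^ 2 / 6 := riemannZeta_two
  have hpiC : ((Real.pi : ℂ)) ^ 2 ≠ 0 := by
    exact_mod_cast pow_ne_zero 2 (Complex.ofReal_ne_zero.mpr hpi)
  have hmu : LSeries (fun n => ((μ n : ℤ) : ℂ)) 2 = 6 / (Real.pi : ℂ) ^ 2 := by
    have h := LSeries_one_mul_Lseries_moebius h2
    rw [LSeries_one_eq_riemannZeta h2, hzeta] at h
    field_simp at h ⊢
    linear_combination h
  have hofreal : ((∑' d : ℕ, ((μ d : ℤ) : ℝ) / (d : ℝ) ^ 2 : ℝ) : ℂ)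
      = LSeries (fun n => ((μ n : ℤ) : ℂ)) 2 := by
    rw [Complex.ofReal_tsum]
    unfold LSeries
    apply tsum_congr
    intro d
    rcases Nat.eq_zero_or_pos d with rfl | hd
    · simp [LSeries.term]
    · rw [LSeries.term_of_ne_zero hd.ne']
      rw [show (2 : ℂ) = ((2 : ℕ) : ℂ) by norm_num, Complex.cpow_natCast]
      push_cast
      ring
  rw [hmu] at hofreal
  have : ((∑' d : ℕ, ((μ d : ℤ) : ℝ) / (d : ℝ) ^ 2 : ℝ) : ℂ) = ((6 / Real.pi ^ 2 : ℝ) : ℂ) := by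
    rw [hofreal]; push_cast; ring
  exact_mod_cast this

end Stmt3Aux

open Stmt3Aux ArithmeticFunction ArithmeticFunction.Moebius in
theorem stmt3 (f : ℕ → ℝ) (C : ℝ) (hfb : ∀ n, |f n| ≤ C)
    (hf1 : f 1 = 1) (hfmul : ∀ m n, f (m * n) = f m * f n)
    (k : ℕ) (P : MvPolynomial (Fin 2) ℤ) (hP : P.IsHomogeneous k)
    (hPnat : ∀ m n : ℕ, 1 ≤ m → 1 ≤ n → 0 ≤ MvPolynomial.eval ![(m : ℤ), (n : ℤ)] P)
    (L : ℝ)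
    (hL : Tendsto (fun N : ℕ =>
        (∑ m ∈ Finset.Icc 1 N, ∑ n ∈ Finset.Icc 1 N, f (Pval P m n)) / (N : ℝ) ^ 2)
      atTop (nhds L)) :
    Tendsto (fun N : ℕ =>
        (∑ p ∈ (Finset.Icc 1 N ×ˢ Finset.Icc 1 N).filter (fun p => Nat.gcd p.1 p.2 = 1),
            f (Pval P p.1 p.2)) /
          (((Finset.Icc 1 N ×ˢ Finset.Icc 1 N).filter
              (fun p => Nat.gcd p.1 p.2 = 1)).card : ℝ))
      atTop
      (nhds ((Real.pi ^ 2 / 6) *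
        (∏' p : {p : ℕ // p.Prime}, (1 - f p.1 ^ k / (p.1 : ℝ) ^ 2)) * L)) := by
  have hfle : ∀ n, |f n| ≤ 1 := f_le_one hfb hf1 hfmul
  -- the numerator sum
  set G : ℕ → ℝ := fun M => ∑ a ∈ Finset.Icc 1 M, ∑ b ∈ Finset.Icc 1 M, f (Pval P a b)
    with hGdef
  have hGabs : ∀ M : ℕ, |G M| ≤ (M : ℝ) ^ 2 := by
    intro M
    calc |G M| ≤ ∑ a ∈ Finset.Icc 1 M, |∑ b ∈ Finset.Icc 1 M, f (Pval P a b)| :=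
          Finset.abs_sum_le_sum_abs _ _
      _ ≤ ∑ a ∈ Finset.Icc 1 M, ∑ b ∈ Finset.Icc 1 M, |f (Pval P a b)| := by
          refine Finset.sum_le_sum fun a _ => Finset.abs_sum_le_sum_abs _ _
      _ ≤ ∑ a ∈ Finset.Icc 1 M, ∑ b ∈ Finset.Icc 1 M, (1 : ℝ) := by
          refine Finset.sum_le_sum fun a _ => Finset.sum_le_sum fun b _ => hfle _
      _ = (M : ℝ) ^ 2 := by
          simp [Nat.card_Icc]
          ring
  set w : ℕ → ℝ := fun d => ((μ d : ℤ) : ℝ) * f d ^ k with hwdef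
  have hw0 : w 0 = 0 := by simp [hwdef]
  have hwle : ∀ d, |w d| ≤ 1 := by
    intro d
    rw [hwdef]
    calc |((μ d : ℤ) : ℝ) * f d ^ k| = |((μ d : ℤ) : ℝ)| * |f d| ^ k := by
          rw [abs_mul, abs_pow]
      _ ≤ 1 * 1 := mul_le_mul (abs_mu_le d) (pow_le_one₀ (abs_nonneg _) (hfle d))
            (by positivity) zero_le_one
      _ = 1 := one_mul 1
  -- numerator identity
  have hnum : ∀ N : ℕ,
      ∑ p ∈ (Finset.Icc 1 N ×ˢ Finset.Icc 1 N).filter (fun p => Nat.gcd p.1 p.2 = 1),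
          f (Pval P p.1 p.2)
        = ∑ d ∈ Finset.Icc 1 N, w d * G (N / d) := by
    intro N
    rw [key_identity (fun m n => f (Pval P m n)) N]
    refine Finset.sum_congr rfl fun d _ => ?_
    rw [hwdef, hGdef]
    simp only [mul_assoc]
    congr 1
    rw [Finset.mul_sum]
    refine Finset.sum_congr rfl fun a ha => ?_
    rw [Finset.mul_sum]
    refine Finset.sum_congr rfl fun b hb => ?_
    simp only [Finset.mem_Icc] at ha hb
    rw [Pval_mul hP hPnat d a b ha.1 hb.1, hfmul, f_pow hf1 hfmul]
  -- denominator identity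
  have hden : ∀ N : ℕ,
      (((Finset.Icc 1 N ×ˢ Finset.Icc 1 N).filter (fun p => Nat.gcd p.1 p.2 = 1)).card : ℝ)
        = ∑ d ∈ Finset.Icc 1 N, ((μ d : ℤ) : ℝ) * ((N / d : ℕ) : ℝ) ^ 2 := by
    intro N
    have h1 := key_identity (fun _ _ => (1 : ℝ)) N
    simp only [Finset.sum_const, nsmul_eq_mul, mul_one] at h1
    rw [h1]
    refine Finset.sum_congr rfl fun d _ => ?_
    congr 1
    simp [Nat.card_Icc]
    ring
  -- limits
  have hlim1 : Tendsto (fun N : ℕ =>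
      (∑ d ∈ Finset.Icc 1 N, w d * G (N / d)) / (N : ℝ) ^ 2) atTop
      (nhds ((∑' d : ℕ, w d / (d : ℝ) ^ 2) * L)) :=
    limB w hw0 hwle G hGabs L hL
  have hlim2 : Tendsto (fun N : ℕ =>
      (∑ d ∈ Finset.Icc 1 N, ((μ d : ℤ) : ℝ) * ((N / d : ℕ) : ℝ) ^ 2) / (N : ℝ) ^ 2) atTop
      (nhds ((∑' d : ℕ, ((μ d : ℤ) : ℝ) / (d : ℝ) ^ 2) * 1)) := by
    have := limB (fun d => ((μ d : ℤ) : ℝ)) (by simp) abs_mu_le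
      (fun M => (M : ℝ) ^ 2) (fun M => by rw [abs_pow, Nat.abs_cast]) 1 ?_
    · exact this
    · apply tendsto_const_nhds.congr'
      filter_upwards [eventually_gt_atTop 0] with M hM
      have : ((M : ℝ)) ^ 2 ≠ 0 := by positivity
      rw [div_self this]
  rw [moebius_tsum_val, mul_one] at hlim2
  have hpi2 : (6 : ℝ) / Real.pi ^ 2 ≠ 0 := by positivity
  have hratio := hlim1.div hlim2 hpi2
  have heq : ((∑' d : ℕ, w d / (d : ℝ) ^ 2) * L) / (6 / Real.pi ^ 2)
      = (Real.pi ^ 2 / 6) *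
        (∏' p : {p : ℕ // p.Prime}, (1 - f p.1 ^ k / (p.1 : ℝ) ^ 2)) * L := by
    have hsum : ∑' d : ℕ, w d / (d : ℝ) ^ 2
        = ∏' p : Nat.Primes, (1 - f p ^ k / (p : ℝ) ^ 2) := by
      rw [← euler_f f hf1 hfmul hfle k]
    rw [hsum]
    have hpi : Real.pi ≠ 0 := Real.pi_ne_zero
    have : (∏' p : Nat.Primes, (1 - f p ^ k / (p : ℝ) ^ 2))
        = ∏' p : {p : ℕ // p.Prime}, (1 - f p.1 ^ k / (p.1 : ℝ) ^ 2) := rfl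
    rw [this]
    field_simp
  rw [heq] at hratio
  apply hratio.congr'
  filter_upwards [eventually_gt_atTop 0] with N hN0
  have hN2 : ((N : ℝ)) ^ 2 ≠ 0 := by positivity
  simp only [Pi.div_apply]
  rw [hnum N, hden N]
  rw [div_div_div_comm, div_self hN2, div_one]
end

section
/- Let f : ℕ → ℝ be a bounded completely multiplicative function and let P ∈ ℤ[x,y] be a homogeneous polynomial of degree k with P(ℕ²) ⊆ ℕ. If the limit L' = lim_{N→∞} 𝔼_{1≤m,n≤N, gcd(m,n)=1} f(P(m,n)) exists, then the limit lim_{N→∞} 𝔼_{1≤m,n≤N} f(P(m,n)) exists and equals (6/π²) · (∑_{n=1}^∞ f(n)^k/n²) · L'. -/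
open Filter Finset Real

section Aux

lemma div_floor_tendsto (d : ℕ) (hd : 1 ≤ d) :
    Tendsto (fun N : ℕ => ((N / d : ℕ) : ℝ) / (N : ℝ)) atTop (nhds (1 / (d : ℝ))) := by
  have hd0 : (0:ℝ) < (d:ℝ) := by exact_mod_cast hd
  apply tendsto_of_tendsto_of_tendsto_of_le_of_le'
    (g := fun N : ℕ => 1 / (d:ℝ) - 1 / (N:ℝ)) (h := fun _ : ℕ => 1 / (d:ℝ))
  · simpa using (tendsto_const_nhds (x := 1/(d:ℝ))).sub tendsto_one_div_atTop_nhds_zero_nat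
  · exact tendsto_const_nhds
  · filter_upwards [eventually_ge_atTop 1] with N hN
    have hN0 : (0:ℝ) < (N:ℝ) := by exact_mod_cast hN
    have key : (N : ℝ) < d * ((N / d : ℕ) : ℝ) + d := by
      have h1 : d * (N / d) + N % d = N := Nat.div_add_mod N d
      have h2 : N % d < d := Nat.mod_lt _ hd
      have : N < d * (N / d) + d := by omega
      exact_mod_cast this
    have hq : (N:ℝ)/d - 1 ≤ ((N/d:ℕ):ℝ) := by
      rw [sub_le_iff_le_add, div_le_iff₀ hd0]; nlinarith
    calc 1/(d:ℝ) - 1/(N:ℝ) = ((N:ℝ)/d - 1)/N := by field_simp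
      _ ≤ ((N/d:ℕ):ℝ)/N := by exact div_le_div_of_nonneg_right hq hN0.le |>.trans_eq rfl
  · filter_upwards [eventually_ge_atTop 1] with N hN
    have hN0 : (0:ℝ) < (N:ℝ) := by exact_mod_cast hN
    have hfl : ((N/d : ℕ) : ℝ) ≤ (N:ℝ)/(d:ℝ) := Nat.cast_div_le
    have h2 := (le_div_iff₀ hd0).mp hfl
    rw [div_le_div_iff₀ hN0 hd0]
    linarith

lemma keyA (a : ℕ → ℝ) (ha : ∀ d, |a d| ≤ 1) (T : ℕ → ℝ) (hT : ∀ M, |T M| ≤ (M:ℝ)^2)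
    (l : ℝ) (hl : Tendsto (fun M : ℕ => T M / (M:ℝ)^2) atTop (nhds l)) :
    Tendsto (fun N : ℕ => (∑ d ∈ Icc 1 N, a d * T (N / d)) / (N:ℝ)^2) atTop
      (nhds (∑' d : ℕ, a d / (d:ℝ)^2 * l)) := by
  set F : ℕ → ℕ → ℝ := fun N d => if d ∈ Icc 1 N then a d * T (N/d) / (N:ℝ)^2 else 0 with hF
  have hmain : Tendsto (fun N : ℕ => ∑' d, F N d) atTop (nhds (∑' d : ℕ, a d / (d:ℝ)^2 * l)) := by
    apply tendsto_tsum_of_dominated_convergence (bound := fun d : ℕ => 1 / (d:ℝ)^2)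
    · exact Real.summable_one_div_nat_pow.mpr one_lt_two
    · intro d
      rcases Nat.eq_zero_or_pos d with rfl | hd
      · simpa [hF] using tendsto_const_nhds
      have hd0 : (0:ℝ) < (d:ℝ) := by exact_mod_cast hd
      have h1 : Tendsto (fun N : ℕ => T (N/d) / (((N/d : ℕ)):ℝ)^2) atTop (nhds l) :=
        hl.comp (Nat.tendsto_div_const_atTop (Nat.one_le_iff_ne_zero.mp hd))
      have h2 : Tendsto (fun N : ℕ => (((N / d : ℕ) : ℝ) / (N : ℝ))^2) atTop
          (nhds ((1/(d:ℝ))^2)) := (div_floor_tendsto d hd).pow 2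
      have h3 : Tendsto (fun N : ℕ => a d * (T (N/d) / (((N/d : ℕ)):ℝ)^2 *
          (((N / d : ℕ) : ℝ) / (N : ℝ))^2)) atTop (nhds (a d * (l * (1/(d:ℝ))^2))) :=
        tendsto_const_nhds.mul (h1.mul h2)
      have heq : a d * (l * (1/(d:ℝ))^2) = a d / (d:ℝ)^2 * l := by
        field_simp
        try ring
      rw [heq] at h3
      apply h3.congr'
      filter_upwards [eventually_ge_atTop d] with N hN
      have hdN : d ∈ Icc 1 N := mem_Icc.mpr ⟨hd, hN⟩
      have hM : 1 ≤ N / d := (Nat.one_le_div_iff hd).mpr hN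
      have hM0 : (0:ℝ) < ((N/d : ℕ) : ℝ) := by exact_mod_cast hM
      have hN0 : (0:ℝ) < (N:ℝ) := by exact_mod_cast le_trans hd hN
      simp only [hF, if_pos hdN]
      field_simp
      try ring
    · filter_upwards with N d
      rcases Nat.eq_zero_or_pos d with rfl | hd
      · simp [hF]
      by_cases hdN : d ∈ Icc 1 N
      · have hN : d ≤ N := (mem_Icc.mp hdN).2
        have hd0 : (0:ℝ) < (d:ℝ) := by exact_mod_cast hd
        have hN0 : (0:ℝ) < (N:ℝ) := by exact_mod_cast le_trans hd hN
        simp only [hF, if_pos hdN, Real.norm_eq_abs]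
        rw [abs_div, abs_mul, abs_pow, abs_of_pos hN0]
        have hfl : ((N/d : ℕ) : ℝ) ≤ (N:ℝ)/(d:ℝ) := Nat.cast_div_le
        have hfl0 : (0:ℝ) ≤ ((N/d : ℕ) : ℝ) := Nat.cast_nonneg _
        have hb1 : |a d| * |T (N/d)| ≤ ((N:ℝ)/(d:ℝ))^2 := by
          calc |a d| * |T (N/d)| ≤ 1 * ((N/d : ℕ) : ℝ)^2 :=
                mul_le_mul (ha d) (hT _) (abs_nonneg _) zero_le_one
            _ = ((N/d : ℕ) : ℝ)^2 := one_mul _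
            _ ≤ ((N:ℝ)/(d:ℝ))^2 := by apply pow_le_pow_left₀ hfl0 hfl
        rw [div_le_div_iff₀ (by positivity) (by positivity)]
        calc |a d| * |T (N/d)| * (d:ℝ)^2 ≤ ((N:ℝ)/(d:ℝ))^2 * (d:ℝ)^2 :=
              mul_le_mul_of_nonneg_right hb1 (by positivity)
          _ = 1 * (N:ℝ)^2 := by field_simp
      · simp only [hF, if_neg hdN, norm_zero]
        positivity
  apply hmain.congr
  intro N
  rw [tsum_eq_sum (s := Icc 1 N) (by intro d hd; simp only [hF]; rw [if_neg hd])]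
  rw [Finset.sum_div]
  refine Finset.sum_congr rfl fun d hd => ?_
  simp only [hF]; rw [if_pos hd]

open ArithmeticFunction in
lemma mu_abs (n : ℕ) : |((moebius n : ℤ) : ℝ)| ≤ 1 := by
  have h := ArithmeticFunction.abs_moebius_le_one (n := n)
  calc |((moebius n : ℤ) : ℝ)| = ((|moebius n| : ℤ) : ℝ) := by push_cast; ring
    _ ≤ 1 := by exact_mod_cast h

open ArithmeticFunction in
lemma sum_mu : ∑' d : ℕ, ((moebius d : ℤ) : ℝ) / (d:ℝ)^2 = 6 / Real.pi^2 := by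
  have h2 : (1:ℝ) < (2:ℂ).re := by norm_num
  have hzeta := ArithmeticFunction.LSeries_zeta_mul_Lseries_moebius (s := 2) h2
  have hz2 := ArithmeticFunction.LSeries_zeta_eq_riemannZeta (s := 2) h2
  rw [hz2, riemannZeta_two] at hzeta
  have hpi2 : ((Real.pi : ℂ))^2 ≠ 0 := by
    simp [pow_eq_zero_iff, Complex.ofReal_ne_zero, Real.pi_ne_zero]
  have hL : LSeries (fun n => (moebius n : ℂ)) 2 = 6 / (Real.pi : ℂ)^2 := by
    field_simp at hzeta
    rw [eq_div_iff hpi2]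
    linear_combination hzeta
  have hterm : ∀ n : ℕ, (((((moebius n : ℤ) : ℝ)) / (n:ℝ)^2 : ℝ) : ℂ)
      = LSeries.term (fun n => (moebius n : ℂ)) 2 n := by
    intro n
    rcases Nat.eq_zero_or_pos n with rfl | hn
    · simp [LSeries.term]
    · rw [LSeries.term_of_ne_zero (Nat.pos_iff_ne_zero.mp hn)]
      have : ((n:ℂ))^(2:ℂ) = ((n:ℂ))^(2:ℕ) := by
        rw [← Complex.cpow_natCast]; norm_num
      rw [this]
      push_cast
      ring
  have key : (((∑' d : ℕ, ((moebius d : ℤ) : ℝ) / (d:ℝ)^2) : ℝ) : ℂ) = 6 / (Real.pi:ℂ)^2 := by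
    calc (((∑' d : ℕ, ((moebius d : ℤ) : ℝ) / (d:ℝ)^2) : ℝ) : ℂ)
        = ∑' n : ℕ, LSeries.term (fun n => (moebius n : ℂ)) 2 n := by
          rw [Complex.ofReal_tsum]; exact tsum_congr hterm
      _ = LSeries (fun n => (moebius n : ℂ)) 2 := rfl
      _ = 6 / (Real.pi:ℂ)^2 := hL
  apply Complex.ofReal_injective
  rw [key]
  push_cast
  ring

open ArithmeticFunction in
lemma sum_div_mu (n : ℕ) : ∑ d ∈ n.divisors, (moebius d : ℤ) = if n = 1 then 1 else 0 := by
  have h : ((moebius : ArithmeticFunction ℤ) * (zeta : ArithmeticFunction ℕ)) n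
      = (1 : ArithmeticFunction ℤ) n := by
    rw [ArithmeticFunction.moebius_mul_coe_zeta]
  rw [ArithmeticFunction.coe_mul_zeta_apply, ArithmeticFunction.one_apply] at h
  simpa using h

open ArithmeticFunction in
lemma card_cop (N : ℕ) :
    (((Icc 1 N ×ˢ Icc 1 N).filter (fun p : ℕ × ℕ => Nat.gcd p.1 p.2 = 1)).card : ℤ)
      = ∑ d ∈ Icc 1 N, moebius d * ((N / d : ℕ) : ℤ)^2 := by
  rw [← Finset.sum_boole]
  have step1 : ∀ p ∈ Icc 1 N ×ˢ Icc 1 N,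
      (if Nat.gcd p.1 p.2 = 1 then (1:ℤ) else 0)
        = ∑ d ∈ Icc 1 N, if d ∣ Nat.gcd p.1 p.2 then (moebius d : ℤ) else 0 := by
    rintro ⟨m, n⟩ hp
    rw [Finset.mem_product, Finset.mem_Icc, Finset.mem_Icc] at hp
    obtain ⟨⟨hm1, hmN⟩, hn1, hnN⟩ := hp
    have hg1 : 1 ≤ Nat.gcd m n := Nat.gcd_pos_of_pos_left n hm1
    have hgN : Nat.gcd m n ≤ N := le_trans (Nat.le_of_dvd hm1 (Nat.gcd_dvd_left m n)) hmN
    rw [← Finset.sum_filter]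
    have hset : (Icc 1 N).filter (· ∣ Nat.gcd m n) = (Nat.gcd m n).divisors := by
      ext e
      simp only [Finset.mem_filter, Finset.mem_Icc, Nat.mem_divisors]
      constructor
      · rintro ⟨_, he⟩; exact ⟨he, by omega⟩
      · rintro ⟨he, _⟩
        exact ⟨⟨Nat.pos_of_dvd_of_pos he hg1, le_trans (Nat.le_of_dvd hg1 he) hgN⟩, he⟩
    rw [hset, sum_div_mu]
  rw [Finset.sum_congr rfl step1, Finset.sum_comm]
  refine Finset.sum_congr rfl fun d hd => ?_
  have hd1 : 1 ≤ d := (Finset.mem_Icc.mp hd).1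
  have hdvd : ∀ p : ℕ × ℕ, d ∣ Nat.gcd p.1 p.2 ↔ (d ∣ p.1 ∧ d ∣ p.2) := fun p => Nat.dvd_gcd_iff
  calc ∑ p ∈ Icc 1 N ×ˢ Icc 1 N, (if d ∣ Nat.gcd p.1 p.2 then (moebius d : ℤ) else 0)
      = ∑ p ∈ (Icc 1 N ×ˢ Icc 1 N).filter (fun p : ℕ × ℕ => d ∣ p.1 ∧ d ∣ p.2),
          (moebius d : ℤ) := by
        rw [← Finset.sum_filter]
        congr 1
        apply Finset.filter_congr
        intro p _
        simp [hdvd p]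
    _ = (((Icc 1 N).filter (d ∣ ·) ×ˢ (Icc 1 N).filter (d ∣ ·)).card : ℤ) * moebius d := by
        rw [Finset.filter_product, Finset.sum_const, nsmul_eq_mul]
    _ = moebius d * ((N / d : ℕ) : ℤ)^2 := by
        rw [Finset.card_product]
        have : (Icc 1 N).filter (d ∣ ·) = (Ioc 0 N).filter (d ∣ ·) := by
          rw [← Finset.Icc_add_one_left_eq_Ioc]
          rfl
        rw [this, Nat.Ioc_filter_dvd_card_eq_div]
        push_cast
        ring

lemma fpow {f : ℕ → ℝ} (hf1 : f 1 = 1) (hfmul : ∀ m n, f (m * n) = f m * f n)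
    (n j : ℕ) : f (n ^ j) = f n ^ j := by
  induction j with
  | zero => simpa using hf1
  | succ j ih => rw [pow_succ, pow_succ, hfmul, ih]

lemma f_le_one {f : ℕ → ℝ} {C : ℝ} (hfb : ∀ n, |f n| ≤ C) (hf1 : f 1 = 1)
    (hfmul : ∀ m n, f (m * n) = f m * f n) (n : ℕ) : |f n| ≤ 1 := by
  by_contra h
  push_neg at h
  have hpow : ∀ j : ℕ, |f n| ^ j ≤ C := by
    intro j
    rw [← abs_pow, ← fpow hf1 hfmul]
    exact hfb _
  have := tendsto_pow_atTop_atTop_of_one_lt h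
  obtain ⟨j, hj⟩ := (this.eventually_gt_atTop C).exists
  exact absurd (hpow j) (not_le.mpr hj)

lemma homog_eval_smul {k : ℕ} {P : MvPolynomial (Fin 2) ℤ} (hP : P.IsHomogeneous k)
    (c : ℤ) (x : Fin 2 → ℤ) :
    MvPolynomial.eval (fun i => c * x i) P = c ^ k * MvPolynomial.eval x P := by
  rw [MvPolynomial.eval_eq', MvPolynomial.eval_eq', Finset.mul_sum]
  refine Finset.sum_congr rfl fun d hd => ?_
  have hdeg : ∑ i, d i = k := by
    have h1 : Finsupp.degree d = k := by
      rw [Finsupp.degree_eq_weight_one]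
      exact hP (MvPolynomial.mem_support_iff.mp hd)
    rw [← h1, Finsupp.degree]
    exact (Finset.sum_subset (Finset.subset_univ _)
      (fun i _ hi => Finsupp.notMem_support_iff.mp hi)).symm
  have : ∏ i, (c * x i) ^ d i = c ^ k * ∏ i, x i ^ d i := by
    simp_rw [mul_pow]
    rw [Finset.prod_mul_distrib, Finset.prod_pow_eq_pow_sum]
    rw [hdeg]
  rw [this]; ring

lemma pval_mul {k : ℕ} {P : MvPolynomial (Fin 2) ℤ} (hP : P.IsHomogeneous k)
    (hPnat : ∀ m n : ℕ, 1 ≤ m → 1 ≤ n → 0 ≤ MvPolynomial.eval ![(m : ℤ), (n : ℤ)] P)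
    {d a b : ℕ} (hd : 1 ≤ d) (ha : 1 ≤ a) (hb : 1 ≤ b) :
    Pval P (d * a) (d * b) = d ^ k * Pval P a b := by
  have hvec : ![((d * a : ℕ) : ℤ), ((d * b : ℕ) : ℤ)] = fun i => (d : ℤ) * (![(a:ℤ), (b:ℤ)] i) := by
    funext i
    fin_cases i <;> simp <;> push_cast <;> ring
  unfold Pval
  rw [hvec]
  have hE := hPnat a b ha hb
  rw [homog_eval_smul hP]
  have hcast : (d : ℤ) ^ k * MvPolynomial.eval ![(a:ℤ), (b:ℤ)] P
      = ((d ^ k * (MvPolynomial.eval ![(a:ℤ), (b:ℤ)] P).toNat : ℕ) : ℤ) := by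
    push_cast [Int.toNat_of_nonneg hE]
    ring
  rw [hcast, Int.toNat_natCast]

lemma decomp {f : ℕ → ℝ} (hf1 : f 1 = 1) (hfmul : ∀ m n, f (m * n) = f m * f n)
    {k : ℕ} {P : MvPolynomial (Fin 2) ℤ} (hP : P.IsHomogeneous k)
    (hPnat : ∀ m n : ℕ, 1 ≤ m → 1 ≤ n → 0 ≤ MvPolynomial.eval ![(m : ℤ), (n : ℤ)] P)
    (N : ℕ) :
    ∑ p ∈ Icc 1 N ×ˢ Icc 1 N, f (Pval P p.1 p.2)
      = ∑ d ∈ Icc 1 N, f d ^ k *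
          (∑ q ∈ (Icc 1 (N/d) ×ˢ Icc 1 (N/d)).filter (fun q : ℕ × ℕ => Nat.gcd q.1 q.2 = 1),
            f (Pval P q.1 q.2)) := by
  have hval : ∀ m n : ℕ, 1 ≤ m → 1 ≤ n →
      f (Pval P m n) = f (Nat.gcd m n) ^ k * f (Pval P (m / Nat.gcd m n) (n / Nat.gcd m n)) := by
    intro m n hm hn
    set g := Nat.gcd m n with hg
    have hg1 : 1 ≤ g := Nat.gcd_pos_of_pos_left n hm
    have hmg : 1 ≤ m / g := (Nat.one_le_div_iff hg1).mpr (Nat.le_of_dvd hm (Nat.gcd_dvd_left m n))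
    have hng : 1 ≤ n / g := (Nat.one_le_div_iff hg1).mpr (Nat.le_of_dvd hn (Nat.gcd_dvd_right m n))
    calc f (Pval P m n) = f (Pval P (g * (m / g)) (g * (n / g))) := by
          rw [Nat.mul_div_cancel' (Nat.gcd_dvd_left m n), Nat.mul_div_cancel' (Nat.gcd_dvd_right m n)]
      _ = f (g ^ k * Pval P (m / g) (n / g)) := by rw [pval_mul hP hPnat hg1 hmg hng]
      _ = f (g ^ k) * f (Pval P (m / g) (n / g)) := hfmul _ _
      _ = f g ^ k * f (Pval P (m / g) (n / g)) := by rw [fpow hf1 hfmul]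
  calc ∑ p ∈ Icc 1 N ×ˢ Icc 1 N, f (Pval P p.1 p.2)
      = ∑ x ∈ (Icc 1 N).sigma (fun d =>
            (Icc 1 (N/d) ×ˢ Icc 1 (N/d)).filter (fun q : ℕ × ℕ => Nat.gcd q.1 q.2 = 1)),
          f x.1 ^ k * f (Pval P x.2.1 x.2.2) := by
        apply Finset.sum_nbij'
          (i := fun p : ℕ × ℕ =>
            (⟨Nat.gcd p.1 p.2, (p.1 / Nat.gcd p.1 p.2, p.2 / Nat.gcd p.1 p.2)⟩ :
              Σ _ : ℕ, ℕ × ℕ))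
          (j := fun x : Σ _ : ℕ, ℕ × ℕ => (x.1 * x.2.1, x.1 * x.2.2))
        · rintro ⟨m, n⟩ hp
          rw [Finset.mem_product, Finset.mem_Icc, Finset.mem_Icc] at hp
          obtain ⟨⟨hm1, hmN⟩, hn1, hnN⟩ := hp
          have hg1 : 1 ≤ Nat.gcd m n := Nat.gcd_pos_of_pos_left n hm1
          have hgm : Nat.gcd m n ≤ m := Nat.le_of_dvd hm1 (Nat.gcd_dvd_left m n)
          have hgn : Nat.gcd m n ≤ n := Nat.le_of_dvd hn1 (Nat.gcd_dvd_right m n)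
          rw [Finset.mem_sigma, Finset.mem_filter, Finset.mem_product, Finset.mem_Icc,
            Finset.mem_Icc, Finset.mem_Icc]
          refine ⟨⟨hg1, le_trans hgm hmN⟩, ⟨⟨?_, ?_⟩, ?_, ?_⟩, ?_⟩
          · exact (Nat.one_le_div_iff hg1).mpr hgm
          · exact Nat.div_le_div_right hmN
          · exact (Nat.one_le_div_iff hg1).mpr hgn
          · exact Nat.div_le_div_right hnN
          · exact Nat.coprime_div_gcd_div_gcd hg1
        · rintro ⟨d, a, b⟩ hx
          rw [Finset.mem_sigma, Finset.mem_filter, Finset.mem_product, Finset.mem_Icc,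
            Finset.mem_Icc, Finset.mem_Icc] at hx
          obtain ⟨⟨hd1, hdN⟩, ⟨⟨ha1, haN⟩, hb1, hbN⟩, hab⟩ := hx
          rw [Finset.mem_product, Finset.mem_Icc, Finset.mem_Icc]
          have hd0 : 0 < d := hd1
          constructor
          · exact ⟨Nat.one_le_iff_ne_zero.mpr (by positivity),
              le_trans (le_of_eq (mul_comm d a)) ((Nat.le_div_iff_mul_le hd0).mp haN)⟩
          · exact ⟨Nat.one_le_iff_ne_zero.mpr (by positivity),
              le_trans (le_of_eq (mul_comm d b)) ((Nat.le_div_iff_mul_le hd0).mp hbN)⟩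
        · rintro ⟨m, n⟩ hp
          rw [Finset.mem_product, Finset.mem_Icc, Finset.mem_Icc] at hp
          obtain ⟨⟨hm1, _⟩, hn1, _⟩ := hp
          simp only
          rw [Nat.mul_div_cancel' (Nat.gcd_dvd_left m n),
            Nat.mul_div_cancel' (Nat.gcd_dvd_right m n)]
        · rintro ⟨d, a, b⟩ hx
          rw [Finset.mem_sigma, Finset.mem_filter, Finset.mem_product, Finset.mem_Icc,
            Finset.mem_Icc, Finset.mem_Icc] at hx
          obtain ⟨⟨hd1, hdN⟩, ⟨⟨ha1, haN⟩, hb1, hbN⟩, hab⟩ := hx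
          have hd0 : 0 < d := hd1
          have hgcd : Nat.gcd (d * a) (d * b) = d := by
            rw [Nat.gcd_mul_left, hab, mul_one]
          simp only [hgcd, Nat.mul_div_cancel_left _ hd0]
        · rintro ⟨m, n⟩ hp
          rw [Finset.mem_product, Finset.mem_Icc, Finset.mem_Icc] at hp
          obtain ⟨⟨hm1, _⟩, hn1, _⟩ := hp
          exact hval m n hm1 hn1
    _ = ∑ d ∈ Icc 1 N, ∑ q ∈
            (Icc 1 (N/d) ×ˢ Icc 1 (N/d)).filter (fun q : ℕ × ℕ => Nat.gcd q.1 q.2 = 1),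
          f d ^ k * f (Pval P q.1 q.2) := Finset.sum_sigma _ _ _
    _ = _ := by
        refine Finset.sum_congr rfl fun d _ => ?_
        rw [Finset.mul_sum]

end Aux

theorem stmt4 (f : ℕ → ℝ) (C : ℝ) (hfb : ∀ n, |f n| ≤ C)
    (hf1 : f 1 = 1) (hfmul : ∀ m n, f (m * n) = f m * f n)
    (k : ℕ) (P : MvPolynomial (Fin 2) ℤ) (hP : P.IsHomogeneous k)
    (hPnat : ∀ m n : ℕ, 1 ≤ m → 1 ≤ n → 0 ≤ MvPolynomial.eval ![(m : ℤ), (n : ℤ)] P)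
    (L' : ℝ)
    (hL' : Tendsto (fun N : ℕ =>
        (∑ p ∈ (Finset.Icc 1 N ×ˢ Finset.Icc 1 N).filter (fun p => Nat.gcd p.1 p.2 = 1),
            f (Pval P p.1 p.2)) /
          (((Finset.Icc 1 N ×ˢ Finset.Icc 1 N).filter
              (fun p => Nat.gcd p.1 p.2 = 1)).card : ℝ))
      atTop (nhds L')) :
    Tendsto (fun N : ℕ =>
        (∑ m ∈ Finset.Icc 1 N, ∑ n ∈ Finset.Icc 1 N, f (Pval P m n)) / (N : ℝ) ^ 2)
      atTop
      (nhds ((6 / Real.pi ^ 2) * (∑' n : ℕ, f n ^ k / (n : ℝ) ^ 2) * L')) := by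
  classical
  set cop : ℕ → Finset (ℕ × ℕ) :=
    fun N => (Finset.Icc 1 N ×ˢ Finset.Icc 1 N).filter (fun p : ℕ × ℕ => Nat.gcd p.1 p.2 = 1)
    with hcop
  set T : ℕ → ℝ := fun N => ∑ p ∈ cop N, f (Pval P p.1 p.2) with hTdef
  -- Step A : density of coprime pairs
  have hc : Tendsto (fun N : ℕ => ((cop N).card : ℝ) / (N:ℝ)^2) atTop
      (nhds (6 / Real.pi ^ 2)) := by
    have hone : Tendsto (fun M : ℕ => ((M:ℝ)^2) / (M:ℝ)^2) atTop (nhds 1) := by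
      apply Tendsto.congr' _ tendsto_const_nhds
      filter_upwards [eventually_ge_atTop 1] with M hM
      have : (0:ℝ) < (M:ℝ) := by exact_mod_cast hM
      field_simp
    have hk := keyA (fun d => ((ArithmeticFunction.moebius d : ℤ) : ℝ)) mu_abs
      (fun M => (M:ℝ)^2) (fun M => by rw [abs_pow, Nat.abs_cast]) 1 hone
    have hval : (∑' d : ℕ, ((ArithmeticFunction.moebius d : ℤ) : ℝ) / (d:ℝ)^2 * 1)
        = 6 / Real.pi ^ 2 := by
      simpa [mul_one] using sum_mu
    rw [hval] at hk
    apply hk.congr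
    intro N
    congr 1
    have h := card_cop N
    calc ∑ d ∈ Icc 1 N, ((ArithmeticFunction.moebius d : ℤ) : ℝ) * ((N / d : ℕ) : ℝ)^2
        = ((∑ d ∈ Icc 1 N, ArithmeticFunction.moebius d * ((N / d : ℕ) : ℤ)^2 : ℤ) : ℝ) := by
          rw [Int.cast_sum]
          exact Finset.sum_congr rfl fun d _ => by
            rw [Int.cast_mul, Int.cast_pow, Int.cast_natCast]
      _ = (((cop N).card : ℤ) : ℝ) := by rw [h]
      _ = ((cop N).card : ℝ) := by push_cast; ring
  -- Step B : T N / N² → 6/π² * L'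
  have hTl : Tendsto (fun N : ℕ => T N / (N:ℝ)^2) atTop (nhds (6 / Real.pi ^ 2 * L')) := by
    have hmul := hL'.mul hc
    rw [show L' * (6 / Real.pi ^ 2) = 6 / Real.pi ^ 2 * L' from mul_comm _ _] at hmul
    apply hmul.congr'
    filter_upwards [eventually_ge_atTop 1] with N hN
    have hmem : ((1,1) : ℕ × ℕ) ∈ cop N := by
      simp [hcop, Finset.mem_filter, Finset.mem_product, Finset.mem_Icc, hN]
    have hcard : (0:ℝ) < ((cop N).card : ℝ) := by
      have := Finset.card_pos.mpr ⟨_, hmem⟩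
      exact_mod_cast this
    field_simp
    show _ * ((cop N).card:ℝ) / ((cop N).card:ℝ) = _
    exact mul_div_cancel_right₀ _ hcard.ne'
  -- Step C : |T M| ≤ M²
  have hTb : ∀ M : ℕ, |T M| ≤ (M:ℝ)^2 := by
    intro M
    have h1 : |T M| ≤ ∑ p ∈ cop M, |f (Pval P p.1 p.2)| := Finset.abs_sum_le_sum_abs _ _
    have h2 : ∑ p ∈ cop M, |f (Pval P p.1 p.2)| ≤ ∑ p ∈ cop M, 1 :=
      Finset.sum_le_sum fun p _ => f_le_one hfb hf1 hfmul _
    have h3 : (∑ p ∈ cop M, (1:ℝ)) = ((cop M).card : ℝ) := by simp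
    have h4 : (cop M).card ≤ M^2 := by
      calc (cop M).card ≤ (Icc 1 M ×ˢ Icc 1 M).card := Finset.card_filter_le _ _
        _ = M^2 := by rw [Finset.card_product, Nat.card_Icc]; simp [sq]
    have h4' : ((cop M).card : ℝ) ≤ (M:ℝ)^2 := by exact_mod_cast h4
    linarith
  -- Step D : main application of keyA
  have hfk : ∀ d : ℕ, |f d ^ k| ≤ 1 := by
    intro d
    rw [abs_pow]
    exact pow_le_one₀ (abs_nonneg _) (f_le_one hfb hf1 hfmul d)
  have hk := keyA (fun d => f d ^ k) hfk T hTb (6 / Real.pi ^ 2 * L') hTl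
  rw [tsum_mul_right] at hk
  have hval : (∑' d : ℕ, f d ^ k / (d:ℝ)^2) * (6 / Real.pi ^ 2 * L')
      = (6 / Real.pi ^ 2) * (∑' n : ℕ, f n ^ k / (n : ℝ) ^ 2) * L' := by ring
  rw [hval] at hk
  apply hk.congr
  intro N
  congr 1
  have hnest : ∑ p ∈ Icc 1 N ×ˢ Icc 1 N, f (Pval P p.1 p.2)
      = ∑ m ∈ Icc 1 N, ∑ n ∈ Icc 1 N, f (Pval P m n) :=
    Finset.sum_product _ _ _
  have hdec := decomp hf1 hfmul hP hPnat N
  show ∑ d ∈ Icc 1 N, f d ^ k * T (N / d) = ∑ m ∈ Icc 1 N, ∑ n ∈ Icc 1 N, f (Pval P m n)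
  simp only [hTdef, hcop]
  rw [← hnest, hdec]
end

section
/- Let f : 𝔾* → ℝ be a bounded completely multiplicative function on the nonzero Gaussian integers, and suppose the limit L = lim_{N→∞} 𝔼_{1≤m,n≤N} f(m + in) exists. Then the limit lim_{N→∞} 𝔼_{1≤m,n≤N, gcd(m,n)=1} f(m + in) exists and equals (π²/6) · ∏_p (1 − f(p)/p²) · L, where the product runs over all rational primes p. -/
open Filter Finset Real ArithmeticFunction
open scoped ArithmeticFunction.Moebius ArithmeticFunction.zeta


private lemma gi_ne {m n : ℕ} (hm : 1 ≤ m) : (⟨(m:ℤ),(n:ℤ)⟩ : GaussianInt) ≠ 0 := by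
  intro h
  have h2 : ((⟨(m:ℤ),(n:ℤ)⟩ : GaussianInt)).re = (0 : GaussianInt).re := congrArg Zsqrtd.re h
  simp only [Zsqrtd.re_zero] at h2
  omega

private lemma gi_smul (d m n : ℕ) :
    (⟨((d*m : ℕ) : ℤ), ((d*n : ℕ):ℤ)⟩ : GaussianInt) = (d : GaussianInt) * ⟨(m:ℤ),(n:ℤ)⟩ := by
  ext <;> simp [Zsqrtd.re_mul, Zsqrtd.im_mul]

private lemma identity (f : GaussianInt → ℝ)
    (hfmul : ∀ α β : GaussianInt, α ≠ 0 → β ≠ 0 → f (α * β) = f α * f β) (N : ℕ) :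
    ∑ p ∈ (Finset.Icc 1 N ×ˢ Finset.Icc 1 N).filter (fun p => Nat.gcd p.1 p.2 = 1),
        f ⟨(p.1 : ℤ), (p.2 : ℤ)⟩
    = ∑ d ∈ Finset.Icc 1 N, (μ d : ℝ) * f ((d : ℕ) : GaussianInt) *
        (∑ p ∈ Finset.Icc 1 (N/d) ×ˢ Finset.Icc 1 (N/d), f ⟨(p.1 : ℤ), (p.2 : ℤ)⟩) := by
  rw [Finset.sum_filter]
  have step1 : ∀ p ∈ Finset.Icc 1 N ×ˢ Finset.Icc 1 N,
      (if Nat.gcd p.1 p.2 = 1 then f ⟨(p.1 : ℤ), (p.2 : ℤ)⟩ else 0)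
      = ∑ d ∈ Finset.Icc 1 N,
          (if d ∣ p.1 ∧ d ∣ p.2 then (μ d : ℝ) * f ⟨(p.1 : ℤ), (p.2 : ℤ)⟩ else 0) := by
    rintro ⟨m, n⟩ hp
    simp only [Finset.mem_product, Finset.mem_Icc] at hp
    obtain ⟨⟨hm1, hmN⟩, ⟨hn1, hnN⟩⟩ := hp
    have hgpos : 0 < Nat.gcd m n := Nat.gcd_pos_of_pos_left _ hm1
    have hgN : Nat.gcd m n ≤ N := le_trans (Nat.le_of_dvd hm1 (Nat.gcd_dvd_left m n)) hmN
    have e1 : ∀ d ∈ Finset.Icc 1 N,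
        (if d ∣ m ∧ d ∣ n then (μ d : ℝ) * f ⟨(m : ℤ), (n : ℤ)⟩ else 0)
        = (if d ∣ m ∧ d ∣ n then (μ d : ℝ) else 0) * f ⟨(m : ℤ), (n : ℤ)⟩ := by
      intro d _; split <;> simp
    rw [Finset.sum_congr rfl e1, ← Finset.sum_mul, ← Finset.sum_filter]
    have e2 : (Finset.Icc 1 N).filter (fun d => d ∣ m ∧ d ∣ n) = (Nat.gcd m n).divisors := by
      ext d
      simp only [Finset.mem_filter, Finset.mem_Icc, Nat.mem_divisors, Nat.dvd_gcd_iff]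
      constructor
      · rintro ⟨-, hd⟩; exact ⟨hd, by omega⟩
      · rintro ⟨hd, -⟩
        refine ⟨⟨Nat.pos_of_dvd_of_pos (Nat.dvd_gcd hd.1 hd.2) hgpos, ?_⟩, hd⟩
        exact le_trans (Nat.le_of_dvd hgpos (Nat.dvd_gcd hd.1 hd.2)) hgN
    rw [e2]
    have e3 : ∑ d ∈ (Nat.gcd m n).divisors, (μ d : ℝ)
        = (((μ * (ζ : ArithmeticFunction ℤ)) (Nat.gcd m n) : ℤ) : ℝ) := by
      rw [ArithmeticFunction.coe_mul_zeta_apply]; push_cast; ring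
    rw [e3, ArithmeticFunction.moebius_mul_coe_zeta, ArithmeticFunction.one_apply]
    split <;> simp
  rw [Finset.sum_congr rfl step1, Finset.sum_comm]
  refine Finset.sum_congr rfl ?_
  intro d hd
  simp only [Finset.mem_Icc] at hd
  have hd1 : 0 < d := hd.1
  rw [← Finset.sum_filter, ← Finset.mul_sum]
  have reidx : ∑ p ∈ (Finset.Icc 1 N ×ˢ Finset.Icc 1 N).filter (fun p => d ∣ p.1 ∧ d ∣ p.2),
        f ⟨(p.1 : ℤ), (p.2 : ℤ)⟩
      = ∑ q ∈ Finset.Icc 1 (N/d) ×ˢ Finset.Icc 1 (N/d),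
        f ⟨((d * q.1 : ℕ) : ℤ), ((d * q.2 : ℕ) : ℤ)⟩ := by
    refine Finset.sum_nbij' (fun p => (p.1 / d, p.2 / d)) (fun q => (d * q.1, d * q.2)) ?_ ?_ ?_ ?_ ?_
    · rintro ⟨m, n⟩ hp
      simp only [Finset.mem_filter, Finset.mem_product, Finset.mem_Icc] at hp ⊢
      obtain ⟨⟨⟨hm1, hmN⟩, hn1, hnN⟩, hdm, hdn⟩ := hp
      exact ⟨⟨Nat.one_le_div_iff hd1 |>.2 (Nat.le_of_dvd hm1 hdm), Nat.div_le_div_right hmN⟩,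
        ⟨Nat.one_le_div_iff hd1 |>.2 (Nat.le_of_dvd hn1 hdn), Nat.div_le_div_right hnN⟩⟩
    · rintro ⟨a, b⟩ hq
      simp only [Finset.mem_product, Finset.mem_Icc] at hq
      simp only [Finset.mem_filter, Finset.mem_product, Finset.mem_Icc]
      obtain ⟨⟨ha1, haN⟩, hb1, hbN⟩ := hq
      refine ⟨⟨⟨?_, ?_⟩, ?_, ?_⟩, ⟨a, rfl⟩, ⟨b, rfl⟩⟩
      · exact Nat.one_le_iff_ne_zero.2 (by positivity)
      · calc d * a ≤ d * (N/d) := Nat.mul_le_mul_left d haN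
          _ ≤ N := Nat.mul_div_le N d
      · exact Nat.one_le_iff_ne_zero.2 (by positivity)
      · calc d * b ≤ d * (N/d) := Nat.mul_le_mul_left d hbN
          _ ≤ N := Nat.mul_div_le N d
    · rintro ⟨m, n⟩ hp
      simp only [Finset.mem_filter] at hp
      obtain ⟨-, hdm, hdn⟩ := hp
      simp [Nat.mul_div_cancel' hdm, Nat.mul_div_cancel' hdn]
    · rintro ⟨a, b⟩ _
      simp [Nat.mul_div_cancel_left _ hd1]
    · rintro ⟨m, n⟩ hp
      simp only [Finset.mem_filter] at hp
      obtain ⟨-, hdm, hdn⟩ := hp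
      rw [Nat.mul_div_cancel' hdm, Nat.mul_div_cancel' hdn]
  rw [reidx]
  have term : ∀ q ∈ Finset.Icc 1 (N/d) ×ˢ Finset.Icc 1 (N/d),
      f ⟨((d * q.1 : ℕ) : ℤ), ((d * q.2 : ℕ) : ℤ)⟩
      = f ((d : ℕ) : GaussianInt) * f ⟨(q.1 : ℤ), (q.2 : ℤ)⟩ := by
    rintro ⟨a, b⟩ hq
    simp only [Finset.mem_product, Finset.mem_Icc] at hq
    rw [gi_smul]
    refine hfmul _ _ ?_ (gi_ne hq.1.1)
    have : ((d : GaussianInt)).re = (d : ℤ) := Zsqrtd.re_natCast d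
    intro h
    rw [h] at this
    simp only [Zsqrtd.re_zero] at this
    exact_mod_cast absurd this.symm (by exact_mod_cast (by omega : (d:ℤ) ≠ 0))
  rw [Finset.sum_congr rfl term, ← Finset.mul_sum, mul_assoc]


private lemma nat_div_tendsto (d : ℕ) (hd : 0 < d) : Tendsto (fun N : ℕ => N / d) atTop atTop :=
  tendsto_atTop_atTop.mpr fun b => ⟨b * d, fun n hn => (Nat.le_div_iff_mul_le hd).mpr hn⟩

private lemma ratio_tendsto (d : ℕ) (hd : 0 < d) :
    Tendsto (fun N : ℕ => ((N / d : ℕ) : ℝ) / (N : ℝ)) atTop (nhds (1 / (d : ℝ))) := by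
  have hd0 : (0:ℝ) < d := by exact_mod_cast hd
  have hlow : Tendsto (fun N : ℕ => 1 / (d:ℝ) - 1 / (N:ℝ)) atTop (nhds (1 / (d:ℝ))) := by
    simpa using Filter.Tendsto.sub
      (tendsto_const_nhds : Tendsto (fun _ : ℕ => 1/(d:ℝ)) atTop (nhds (1/(d:ℝ))))
      tendsto_one_div_atTop_nhds_zero_nat
  refine tendsto_of_tendsto_of_tendsto_of_le_of_le' hlow tendsto_const_nhds ?_ ?_
  · filter_upwards [eventually_ge_atTop 1] with N hN
    have hN0 : (0:ℝ) < N := by exact_mod_cast hN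
    have hmod : (N:ℝ) < d * ((N/d : ℕ):ℝ) + d := by
      have h2 : d * (N/d) + N % d = N := Nat.div_add_mod N d
      have h3 : N % d < d := Nat.mod_lt N hd
      have : (d:ℝ) * ((N/d : ℕ):ℝ) + ((N % d : ℕ):ℝ) = (N:ℝ) := by exact_mod_cast h2
      have h4 : ((N % d : ℕ):ℝ) < (d:ℝ) := by exact_mod_cast h3
      linarith
    rw [div_sub_div _ _ (ne_of_gt hd0) (ne_of_gt hN0),
      div_le_div_iff₀ (mul_pos hd0 hN0) hN0]
    have hq0 : (0:ℝ) ≤ ((N/d : ℕ):ℝ) := Nat.cast_nonneg _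
    nlinarith
  · filter_upwards [eventually_ge_atTop 1] with N hN
    have hN0 : (0:ℝ) < N := by exact_mod_cast hN
    calc ((N/d : ℕ):ℝ) / N ≤ ((N:ℝ)/d) / N := by gcongr; exact Nat.cast_div_le
      _ = 1 / d := by rw [div_div, mul_comm, ← div_div, div_self (ne_of_gt hN0)]

private lemma term_tendsto (S : ℕ → ℝ) (L : ℝ)
    (hS : Tendsto (fun M : ℕ => S M / (M:ℝ)^2) atTop (nhds L)) (c : ℝ) (d : ℕ) (hd : 0 < d) :
    Tendsto (fun N : ℕ => c * S (N/d) / (N:ℝ)^2) atTop (nhds (c / (d:ℝ)^2 * L)) := by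
  have hd0 : (0:ℝ) < d := by exact_mod_cast hd
  have h1 := hS.comp (nat_div_tendsto d hd)
  have h2 := (ratio_tendsto d hd).pow 2
  have h3 := Filter.Tendsto.mul
    (tendsto_const_nhds : Tendsto (fun _ : ℕ => c) atTop (nhds c)) (h1.mul h2)
  have hval : c * (L * (1/(d:ℝ))^2) = c / (d:ℝ)^2 * L := by field_simp
  rw [hval] at h3
  refine h3.congr' ?_
  filter_upwards [eventually_ge_atTop d] with N hN
  have hq : 1 ≤ N / d := (Nat.one_le_div_iff hd).2 hN
  have hq0 : ((N/d : ℕ):ℝ) ≠ 0 := by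
    have : (1:ℝ) ≤ ((N/d : ℕ):ℝ) := by exact_mod_cast hq
    linarith
  have hN0 : (N:ℝ) ≠ 0 := by
    have : (1:ℝ) ≤ (N:ℝ) := by exact_mod_cast le_trans hd hN
    linarith
  show c * (S (N/d) / ((N/d : ℕ):ℝ)^2 * (((N/d : ℕ):ℝ)/(N:ℝ))^2) = c * S (N/d) / (N:ℝ)^2
  field_simp

private lemma gi_nat_ne {d : ℕ} (hd : 0 < d) : ((d : ℕ) : GaussianInt) ≠ 0 := by
  intro h
  have h2 := congrArg Zsqrtd.re h
  rw [Zsqrtd.re_natCast, Zsqrtd.re_zero] at h2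
  omega

private lemma key (f : GaussianInt → ℝ) (C : ℝ)
    (hfb : ∀ α : GaussianInt, α ≠ 0 → |f α| ≤ C)
    (hf1 : f 1 = 1)
    (hfmul : ∀ α β : GaussianInt, α ≠ 0 → β ≠ 0 → f (α * β) = f α * f β)
    (L : ℝ)
    (hL : Tendsto (fun N : ℕ =>
        (∑ m ∈ Finset.Icc 1 N, ∑ n ∈ Finset.Icc 1 N, f ⟨(m : ℤ), (n : ℤ)⟩) / (N : ℝ) ^ 2)
      atTop (nhds L)) :
    Tendsto (fun N : ℕ =>
        (∑ p ∈ (Finset.Icc 1 N ×ˢ Finset.Icc 1 N).filter (fun p => Nat.gcd p.1 p.2 = 1),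
            f ⟨(p.1 : ℤ), (p.2 : ℤ)⟩) / (N : ℝ) ^ 2)
      atTop
      (nhds ((∏' p : {p : ℕ // p.Prime}, (1 - f ((p.1 : ℕ) : GaussianInt) / (p.1 : ℝ) ^ 2)) * L)) := by
  have hC1 : 1 ≤ C := by have h := hfb 1 one_ne_zero; rwa [hf1, abs_one] at h
  have hC0 : (0:ℝ) < C := lt_of_lt_of_le one_pos hC1
  set g : ℕ → ℝ := fun d => f ((d : ℕ) : GaussianInt) with hgdef
  set S : ℕ → ℝ := fun M => ∑ p ∈ Finset.Icc 1 M ×ˢ Finset.Icc 1 M, f ⟨(p.1 : ℤ), (p.2 : ℤ)⟩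
    with hSdef
  have hSL : Tendsto (fun M : ℕ => S M / (M:ℝ)^2) atTop (nhds L) := by
    refine hL.congr fun M => ?_
    congr 1
    exact (Finset.sum_product (s := Finset.Icc 1 M) (t := Finset.Icc 1 M)
      (f := fun p => f ⟨(p.1:ℤ),(p.2:ℤ)⟩)).symm
  have hgb : ∀ d : ℕ, 0 < d → |g d| ≤ C := fun d hd => hfb _ (gi_nat_ne hd)
  have hSb : ∀ M : ℕ, |S M| ≤ C * (M:ℝ)^2 := by
    intro M
    calc |S M| ≤ ∑ p ∈ Finset.Icc 1 M ×ˢ Finset.Icc 1 M, |f ⟨(p.1 : ℤ), (p.2 : ℤ)⟩| :=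
          Finset.abs_sum_le_sum_abs _ _
      _ ≤ ∑ _p ∈ Finset.Icc 1 M ×ˢ Finset.Icc 1 M, C := by
          refine Finset.sum_le_sum ?_
          rintro ⟨m,n⟩ hp
          simp only [Finset.mem_product, Finset.mem_Icc] at hp
          exact hfb _ (gi_ne hp.1.1)
      _ = C * (M:ℝ)^2 := by
          rw [Finset.sum_const, Finset.card_product, Nat.card_Icc]
          simp only [Nat.add_sub_cancel, nsmul_eq_mul]
          push_cast
          ring
  set h : ℕ → ℝ := fun d => (μ d : ℝ) * g d / (d:ℝ)^2 with hhdef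
  have hh0 : h 0 = 0 := by simp [hhdef]
  have hg1 : g 1 = 1 := by rw [hgdef]; simp only [Nat.cast_one]; exact hf1
  have hh1 : h 1 = 1 := by simp [hhdef, hg1]
  have hgm : ∀ a b : ℕ, 0 < a → 0 < b → g (a*b) = g a * g b := by
    intro a b ha hb
    rw [hgdef]
    simp only [Nat.cast_mul]
    exact hfmul _ _ (gi_nat_ne ha) (gi_nat_ne hb)
  have hhmul : ∀ {m n : ℕ}, Nat.Coprime m n → h (m*n) = h m * h n := by
    intro m n hmn
    rcases Nat.eq_zero_or_pos m with rfl | hm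
    · have hn1 : n = 1 := by simpa [Nat.coprime_zero_left] using hmn
      subst hn1; simp [hh0, hh1]
    rcases Nat.eq_zero_or_pos n with rfl | hn
    · have hm1 : m = 1 := by simpa [Nat.coprime_zero_right] using hmn
      subst hm1; simp [hh0, hh1]
    rw [hhdef]
    simp only
    rw [isMultiplicative_moebius.map_mul_of_coprime hmn, hgm m n hm hn]
    have hm0 : ((m:ℝ)) ≠ 0 := by positivity
    have hn0 : ((n:ℝ)) ≠ 0 := by positivity
    push_cast
    field_simp
  have hμb : ∀ d : ℕ, |(μ d : ℝ)| ≤ 1 := by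
    intro d
    have h := abs_moebius_le_one (n := d)
    calc |((μ d : ℤ) : ℝ)| = ((|μ d| : ℤ) : ℝ) := by push_cast; ring
      _ ≤ 1 := by exact_mod_cast h
  have hsumC : Summable (fun d : ℕ => C * (1/(d:ℝ)^2)) :=
    (summable_one_div_nat_pow.mpr one_lt_two).mul_left C
  have hhb : ∀ d : ℕ, 0 < d → ‖h d‖ ≤ C * (1/(d:ℝ)^2) := by
    intro d hd
    have hd0 : (0:ℝ) < (d:ℝ) := by exact_mod_cast hd
    rw [Real.norm_eq_abs, hhdef]
    simp only
    rw [abs_div, abs_mul, abs_of_nonneg (by positivity : (0:ℝ) ≤ (d:ℝ)^2)]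
    calc |(μ d : ℝ)| * |g d| / (d:ℝ)^2 ≤ 1 * C / (d:ℝ)^2 := by
          gcongr
          · exact hμb d
          · exact hgb d hd
      _ = C * (1/(d:ℝ)^2) := by ring
  have hsum : Summable (fun d : ℕ => ‖h d‖) := by
    refine Summable.of_nonneg_of_le (fun d => norm_nonneg _) ?_ hsumC
    intro d
    rcases Nat.eq_zero_or_pos d with rfl | hd
    · rw [hh0]
      simp only [norm_zero]
      positivity
    · exact hhb d hd
  have euler : (∏' p : Nat.Primes, (∑' e : ℕ, h ((p:ℕ)^e))) = ∑' n, h n :=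
    EulerProduct.eulerProduct_tprod hh1 hhmul hsum hh0
  have factor : ∀ p : {p : ℕ // p.Prime},
      (∑' e : ℕ, h ((p:ℕ)^e)) = 1 - f ((p.1 : ℕ) : GaussianInt) / (p.1 : ℝ)^2 := by
    rintro ⟨p, hp⟩
    have hz : ∀ e ∉ ({0,1} : Finset ℕ), h (p^e) = 0 := by
      intro e he
      simp only [Finset.mem_insert, Finset.mem_singleton] at he
      push_neg at he
      have hμ0 := moebius_apply_prime_pow hp (show e ≠ 0 from he.1)
      rw [if_neg he.2] at hμ0
      simp [hhdef, hμ0]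
    rw [show ((⟨p, hp⟩ : {p : ℕ // p.Prime}) : ℕ) = p from rfl]
    rw [tsum_eq_sum hz, Finset.sum_pair (by norm_num : (0:ℕ) ≠ 1)]
    rw [pow_zero, pow_one, hh1]
    have hhp : h p = - (g p / (p:ℝ)^2) := by
      rw [hhdef]
      simp only
      rw [moebius_apply_prime hp]
      push_cast
      ring
    rw [hhp, hgdef]
    simp only
    ring
  set u : ℕ → ℕ → ℝ := fun N d => ((μ d : ℝ) * g d * S (N/d)) / (N:ℝ)^2 with hudef
  have hu0 : ∀ N, u N 0 = 0 := by intro N; simp [hudef]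
  have hS0 : S 0 = 0 := by
    rw [hSdef]
    simp
  have hout : ∀ N : ℕ, ∀ d ∉ Finset.Icc 1 N, u N d = 0 := by
    intro N d hd
    simp only [Finset.mem_Icc, not_and_or, not_le] at hd
    rcases hd with hd | hd
    · have : d = 0 := by omega
      subst this; exact hu0 N
    · have hNd : N / d = 0 := Nat.div_eq_of_lt hd
      rw [hudef]
      simp only
      rw [hNd, hS0]
      ring
  have hab : ∀ d : ℕ, Tendsto (fun N => u N d) atTop (nhds (h d * L)) := by
    intro d
    rcases Nat.eq_zero_or_pos d with rfl | hd
    · simp only [hu0, hh0, zero_mul]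
      exact tendsto_const_nhds
    · have ht := term_tendsto S L hSL ((μ d : ℝ) * g d) d hd
      rw [hhdef]
      exact ht
  have hbound : ∀ N : ℕ, ∀ d : ℕ, ‖u N d‖ ≤ (C*C) * (1/(d:ℝ)^2) := by
    intro N d
    rcases Nat.eq_zero_or_pos d with rfl | hd
    · rw [hu0]
      simp only [norm_zero]
      positivity
    rcases Nat.eq_zero_or_pos N with rfl | hN
    · rw [hudef]
      simp only
      rw [Nat.zero_div, hS0]
      simp only [mul_zero, zero_div, norm_zero]
      positivity
    have hd0 : (0:ℝ) < (d:ℝ) := by exact_mod_cast hd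
    have hN0 : (0:ℝ) < (N:ℝ) := by exact_mod_cast hN
    rw [Real.norm_eq_abs, hudef]
    simp only
    rw [abs_div, abs_mul, abs_of_nonneg (by positivity : (0:ℝ) ≤ (N:ℝ)^2)]
    calc |(μ d : ℝ) * g d| * |S (N/d)| / (N:ℝ)^2
        ≤ (1 * C) * (C * ((N/d : ℕ):ℝ)^2) / (N:ℝ)^2 := by
          gcongr
          · rw [abs_mul]
            gcongr
            · exact hμb d
            · exact hgb d hd
          · exact hSb (N/d)
      _ ≤ (1 * C) * (C * ((N:ℝ)^2/(d:ℝ)^2)) / (N:ℝ)^2 := by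
          gcongr
          rw [← div_pow]
          exact pow_le_pow_left₀ (Nat.cast_nonneg _) Nat.cast_div_le 2
      _ = (C*C) * (1/(d:ℝ)^2) := by field_simp
  have hsumCC : Summable (fun d : ℕ => (C*C) * (1/(d:ℝ)^2)) :=
    (summable_one_div_nat_pow.mpr one_lt_two).mul_left (C*C)
  have main := tendsto_tsum_of_dominated_convergence hsumCC hab
    (Eventually.of_forall hbound)
  have hTu : ∀ N : ℕ,
      (∑ p ∈ (Finset.Icc 1 N ×ˢ Finset.Icc 1 N).filter (fun p => Nat.gcd p.1 p.2 = 1),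
        f ⟨(p.1 : ℤ), (p.2 : ℤ)⟩) / (N : ℝ)^2 = ∑' d, u N d := by
    intro N
    rw [tsum_eq_sum (hout N), identity f hfmul N, Finset.sum_div]
  have hval : (∑' d, h d * L) = (∑' n, h n) * L := tsum_mul_right
  have hprod : (∏' p : {p : ℕ // p.Prime}, (1 - f ((p.1 : ℕ) : GaussianInt) / (p.1 : ℝ)^2))
      = ∑' n, h n := by
    rw [← euler]
    exact tprod_congr fun p => (factor p).symm
  rw [hprod]
  rw [← hval]
  exact main.congr fun N => (hTu N).symm

private lemma basel : (∏' p : {p : ℕ // p.Prime}, (1 - 1 / ((p : ℕ) : ℝ)^2)) = 6 / π^2 := by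
  set F : ℕ →*₀ ℝ :=
    { toFun := fun n => ((n:ℝ)^2)⁻¹
      map_zero' := by norm_num
      map_one' := by norm_num
      map_mul' := by intro a b; push_cast; rw [mul_pow, mul_inv] } with hF
  have hFapp : ∀ n : ℕ, F n = 1/(n:ℝ)^2 := by intro n; rw [hF]; simp [one_div]
  have hsumF : Summable (fun n : ℕ => ‖F n‖) := by
    refine ((summable_one_div_nat_pow (p := 2)).mpr one_lt_two).congr fun n => ?_
    rw [Real.norm_eq_abs, hFapp, abs_of_nonneg (by positivity)]
  have HP := EulerProduct.eulerProduct_completely_multiplicative_hasProd hsumF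
  have htsum : ∑' n : ℕ, F n = π^2/6 := by
    rw [tsum_congr hFapp]
    exact hasSum_zeta_two.tsum_eq
  rw [htsum] at HP
  have hπ : π^2/6 ≠ 0 := by positivity
  have HP2 : HasProd (fun p : Nat.Primes => 1 - F (p:ℕ)) (6/π^2) := by
    have h1 : Tendsto (fun s : Finset Nat.Primes => (∏ p ∈ s, (1 - F (p:ℕ))⁻¹)⁻¹) atTop
        (nhds ((π^2/6)⁻¹)) := Filter.Tendsto.inv₀ HP hπ
    have h2 : ∀ s : Finset Nat.Primes,
        (∏ p ∈ s, (1 - F (p:ℕ))⁻¹)⁻¹ = ∏ p ∈ s, (1 - F (p:ℕ)) := by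
      intro s; rw [Finset.prod_inv_distrib, inv_inv]
    have h3 := h1.congr h2
    rw [inv_div] at h3
    exact h3
  have := HP2.tprod_eq
  rw [← this]
  exact tprod_congr fun p => by rw [hFapp]

theorem stmt6 (f : GaussianInt → ℝ) (C : ℝ)
    (hfb : ∀ α : GaussianInt, α ≠ 0 → |f α| ≤ C)
    (hf1 : f 1 = 1)
    (hfmul : ∀ α β : GaussianInt, α ≠ 0 → β ≠ 0 → f (α * β) = f α * f β)
    (L : ℝ)
    (hL : Tendsto (fun N : ℕ =>
        (∑ m ∈ Finset.Icc 1 N, ∑ n ∈ Finset.Icc 1 N,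
            f ⟨(m : ℤ), (n : ℤ)⟩) / (N : ℝ) ^ 2)
      atTop (nhds L)) :
    Tendsto (fun N : ℕ =>
        (∑ p ∈ (Finset.Icc 1 N ×ˢ Finset.Icc 1 N).filter (fun p => Nat.gcd p.1 p.2 = 1),
            f ⟨(p.1 : ℤ), (p.2 : ℤ)⟩) /
          (((Finset.Icc 1 N ×ˢ Finset.Icc 1 N).filter
              (fun p => Nat.gcd p.1 p.2 = 1)).card : ℝ))
      atTop
      (nhds ((Real.pi ^ 2 / 6) *
        (∏' p : {p : ℕ // p.Prime}, (1 - f ((p.1 : ℕ) : GaussianInt) / (p.1 : ℝ) ^ 2)) * L)) := by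
  have hnum := key f C hfb hf1 hfmul L hL
  have hL1 : Tendsto (fun N : ℕ =>
      (∑ m ∈ Finset.Icc 1 N, ∑ n ∈ Finset.Icc 1 N,
        (fun _ : GaussianInt => (1:ℝ)) ⟨(m : ℤ), (n : ℤ)⟩) / (N : ℝ) ^ 2)
      atTop (nhds 1) := by
    refine Tendsto.congr' ?_ (tendsto_const_nhds : Tendsto (fun _ : ℕ => (1:ℝ)) atTop (nhds 1))
    filter_upwards [eventually_ge_atTop 1] with N hN
    have hN0 : (N:ℝ) ≠ 0 := by
      have : (1:ℝ) ≤ (N:ℝ) := by exact_mod_cast hN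
      linarith
    have hsum : (∑ m ∈ Finset.Icc 1 N, ∑ n ∈ Finset.Icc 1 N, (1:ℝ)) = (N:ℝ)*(N:ℝ) := by
      simp [Finset.sum_const, Nat.card_Icc]
    rw [hsum, pow_two, div_self (by exact mul_ne_zero hN0 hN0)]
  have hden := key (fun _ => (1:ℝ)) 1 (fun _ _ => by norm_num) rfl
    (fun _ _ _ _ => by norm_num) 1 hL1
  rw [basel, mul_one] at hden
  have hden' : Tendsto (fun N : ℕ =>
      (((Finset.Icc 1 N ×ˢ Finset.Icc 1 N).filter
        (fun p => Nat.gcd p.1 p.2 = 1)).card : ℝ) / (N : ℝ)^2) atTop (nhds (6/π^2)) := by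
    refine hden.congr fun N => ?_
    congr 1
    simp
  have hne : (6:ℝ)/π^2 ≠ 0 := by positivity
  have hfinal := hnum.div hden' hne
  have hval : ((∏' p : {p : ℕ // p.Prime},
      (1 - f ((p.1 : ℕ) : GaussianInt) / (p.1 : ℝ) ^ 2)) * L) / (6/π^2)
      = (π ^ 2 / 6) * (∏' p : {p : ℕ // p.Prime},
        (1 - f ((p.1 : ℕ) : GaussianInt) / (p.1 : ℝ) ^ 2)) * L := by
    rw [div_div_eq_mul_div]
    ring
  rw [hval] at hfinal
  refine hfinal.congr' ?_
  filter_upwards [eventually_ge_atTop 1] with N hN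
  have hN0 : ((N:ℝ))^2 ≠ 0 := by
    have : (1:ℝ) ≤ (N:ℝ) := by exact_mod_cast hN
    positivity
  exact div_div_div_cancel_right₀ hN0 _ _
end

section
/- For any bounded function b : ℕ² → ℂ, if for every integer d ≥ 1 the limit lim_{N→∞} 𝔼_{1≤m,n≤N} b(dm, dn) exists and equals a common value c (independent of d), then lim_{N→∞} (1/N²) ∑_{1≤m,n≤N, gcd(m,n)=1} b(m,n) = (6/π²) · c, and hence lim_{N→∞} 𝔼_{1≤m,n≤N, gcd(m,n)=1} b(m,n) = c. -/
open Filter Finset Real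
open ArithmeticFunction
open scoped LSeries.notation
open scoped ArithmeticFunction.Moebius

lemma sum_coprime_eq' (b : ℕ × ℕ → ℂ) (N : ℕ) :
    ∑ p ∈ (Finset.Icc 1 N ×ˢ Finset.Icc 1 N).filter (fun p => Nat.gcd p.1 p.2 = 1), b p
      = ∑ d ∈ Finset.Icc 1 N, (μ d : ℂ) *
          ∑ m ∈ Finset.Icc 1 (N / d), ∑ n ∈ Finset.Icc 1 (N / d), b (d * m, d * n) := by
  have step1 : ∀ d ∈ Finset.Icc 1 N,
      (∑ m ∈ Finset.Icc 1 (N / d), ∑ n ∈ Finset.Icc 1 (N / d), b (d * m, d * n))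
        = ∑ p ∈ (Finset.Icc 1 N ×ˢ Finset.Icc 1 N).filter (fun p => d ∣ p.1 ∧ d ∣ p.2), b p := by
    intro d hd
    rw [Finset.mem_Icc] at hd
    have hd0 : 0 < d := hd.1
    rw [← Finset.sum_product']
    refine Finset.sum_nbij' (fun p => (d * p.1, d * p.2)) (fun p => (p.1 / d, p.2 / d)) ?_ ?_ ?_ ?_ ?_
    · intro p hp
      simp only [Finset.mem_product, Finset.mem_Icc] at hp
      simp only [Finset.mem_filter, Finset.mem_product, Finset.mem_Icc]
      refine ⟨⟨⟨Nat.mul_pos hd0 hp.1.1, ?_⟩, ⟨Nat.mul_pos hd0 hp.2.1, ?_⟩⟩, ⟨Dvd.intro _ rfl, Dvd.intro _ rfl⟩⟩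
      · rw [mul_comm]; exact (Nat.le_div_iff_mul_le hd0).1 hp.1.2
      · rw [mul_comm]; exact (Nat.le_div_iff_mul_le hd0).1 hp.2.2
    · intro p hp
      simp only [Finset.mem_filter, Finset.mem_product, Finset.mem_Icc] at hp
      obtain ⟨⟨⟨h11, h12⟩, h21, h22⟩, hdvd1, hdvd2⟩ := hp
      simp only [Finset.mem_product, Finset.mem_Icc]
      exact ⟨⟨Nat.one_le_div_iff hd0 |>.2 (Nat.le_of_dvd h11 hdvd1), Nat.div_le_div_right h12⟩,
        ⟨Nat.one_le_div_iff hd0 |>.2 (Nat.le_of_dvd h21 hdvd2), Nat.div_le_div_right h22⟩⟩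
    · intro p hp
      simp [Nat.mul_div_cancel_left _ hd0]
    · intro p hp
      simp only [Finset.mem_filter, Finset.mem_product, Finset.mem_Icc] at hp
      obtain ⟨⟨⟨h11, h12⟩, h21, h22⟩, hdvd1, hdvd2⟩ := hp
      simp [Nat.mul_div_cancel' hdvd1, Nat.mul_div_cancel' hdvd2]
    · intro p hp; rfl
  have step2 : ∑ d ∈ Finset.Icc 1 N, (μ d : ℂ) *
          ∑ m ∈ Finset.Icc 1 (N / d), ∑ n ∈ Finset.Icc 1 (N / d), b (d * m, d * n)
      = ∑ d ∈ Finset.Icc 1 N, ∑ p ∈ Finset.Icc 1 N ×ˢ Finset.Icc 1 N,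
          if d ∣ p.1 ∧ d ∣ p.2 then (μ d : ℂ) * b p else 0 := by
    refine Finset.sum_congr rfl fun d hd => ?_
    rw [step1 d hd, Finset.mul_sum, Finset.sum_filter]
  rw [step2, Finset.sum_comm]
  have key : ∀ p ∈ Finset.Icc 1 N ×ˢ Finset.Icc 1 N,
      (∑ d ∈ Finset.Icc 1 N, if d ∣ p.1 ∧ d ∣ p.2 then (μ d : ℂ) * b p else 0)
        = (if Nat.gcd p.1 p.2 = 1 then (1:ℂ) else 0) * b p := by
    intro p hp
    simp only [Finset.mem_product, Finset.mem_Icc] at hp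
    have hg0 : 0 < Nat.gcd p.1 p.2 := Nat.gcd_pos_of_pos_left _ hp.1.1
    have hgN : Nat.gcd p.1 p.2 ≤ N := le_trans (Nat.gcd_le_left _ hp.1.1) hp.1.2
    have hcond : ∀ d : ℕ, (d ∣ p.1 ∧ d ∣ p.2) ↔ d ∣ Nat.gcd p.1 p.2 := fun d =>
      ⟨fun hh => Nat.dvd_gcd hh.1 hh.2,
       fun hh => ⟨hh.trans (Nat.gcd_dvd_left _ _), hh.trans (Nat.gcd_dvd_right _ _)⟩⟩
    simp_rw [hcond]
    rw [← Finset.sum_filter]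
    have hset : (Finset.Icc 1 N).filter (· ∣ Nat.gcd p.1 p.2) = (Nat.gcd p.1 p.2).divisors := by
      ext d
      simp only [Finset.mem_filter, Finset.mem_Icc, Nat.mem_divisors]
      constructor
      · rintro ⟨_, hd⟩; exact ⟨hd, hg0.ne'⟩
      · rintro ⟨hd, _⟩
        exact ⟨⟨Nat.pos_of_dvd_of_pos hd hg0, le_trans (Nat.le_of_dvd hg0 hd) hgN⟩, hd⟩
    rw [hset, ← Finset.sum_mul]
    congr 1
    have hmz := congrArg (fun f : ArithmeticFunction ℤ => f (Nat.gcd p.1 p.2)) moebius_mul_coe_zeta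
    simp only [coe_mul_zeta_apply, one_apply] at hmz
    have : (∑ d ∈ (Nat.gcd p.1 p.2).divisors, ((μ d : ℤ) : ℂ))
        = (((∑ d ∈ (Nat.gcd p.1 p.2).divisors, μ d : ℤ)) : ℂ) := by push_cast; ring
    rw [this, hmz]
    push_cast
    rfl
  rw [Finset.sum_congr rfl key, Finset.sum_filter]
  refine Finset.sum_congr rfl fun p _ => ?_
  by_cases hp : Nat.gcd p.1 p.2 = 1 <;> simp [hp]

lemma key_tendsto (b : ℕ × ℕ → ℂ) (B : ℝ) (hb : ∀ p, ‖b p‖ ≤ B) (c : ℂ)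
    (h : ∀ d : ℕ, 1 ≤ d →
      Tendsto (fun N : ℕ =>
          (∑ m ∈ Finset.Icc 1 N, ∑ n ∈ Finset.Icc 1 N, b (d * m, d * n)) / (N : ℂ) ^ 2)
        atTop (nhds c)) :
    Tendsto (fun N : ℕ =>
        (∑ p ∈ (Finset.Icc 1 N ×ˢ Finset.Icc 1 N).filter (fun p => Nat.gcd p.1 p.2 = 1),
            b p) / (N : ℂ) ^ 2)
      atTop (nhds ((6 / (Real.pi : ℂ) ^ 2) * c)) := by
  have hB0 : 0 ≤ B := le_trans (norm_nonneg _) (hb (1, 1))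
  set S : ℕ → ℕ → ℂ := fun d M => ∑ m ∈ Finset.Icc 1 M, ∑ n ∈ Finset.Icc 1 M, b (d * m, d * n)
    with hS
  set F : ℕ → ℕ → ℂ := fun N d =>
    if d ∈ Finset.Icc 1 N then (μ d : ℂ) * S d (N / d) / (N : ℂ) ^ 2 else 0 with hF
  set g : ℕ → ℂ := fun d => (μ d : ℂ) * (1 / (d : ℂ)) ^ 2 * c with hg
  -- bound on S
  have hSb : ∀ d M : ℕ, ‖S d M‖ ≤ (M : ℝ) ^ 2 * B := by
    intro d M
    calc ‖S d M‖ ≤ ∑ m ∈ Finset.Icc 1 M, ‖∑ n ∈ Finset.Icc 1 M, b (d * m, d * n)‖ :=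
          norm_sum_le _ _
    _ ≤ ∑ m ∈ Finset.Icc 1 M, ∑ n ∈ Finset.Icc 1 M, ‖b (d * m, d * n)‖ :=
          Finset.sum_le_sum fun _ _ => norm_sum_le _ _
    _ ≤ ∑ _m ∈ Finset.Icc 1 M, ∑ _n ∈ Finset.Icc 1 M, B :=
          Finset.sum_le_sum fun _ _ => Finset.sum_le_sum fun _ _ => hb _
    _ = (M : ℝ) ^ 2 * B := by
          simp [Finset.sum_const, Nat.card_Icc, nsmul_eq_mul]; ring
  -- the uniform bound
  have hFb : ∀ N d, ‖F N d‖ ≤ B * (1 / (d : ℝ) ^ 2) := by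
    intro N d
    by_cases hd : d ∈ Finset.Icc 1 N
    · rw [Finset.mem_Icc] at hd
      have hd0 : 0 < d := hd.1
      have hN0 : 0 < N := le_trans hd.1 hd.2
      have hdR : (0:ℝ) < d := by exact_mod_cast hd0
      have hNR : (0:ℝ) < N := by exact_mod_cast hN0
      simp only [hF, if_pos (Finset.mem_Icc.2 hd)]
      rw [norm_div, norm_mul, norm_pow, Complex.norm_natCast]
      have h1 : ‖(μ d : ℂ)‖ ≤ 1 := by
        rw [Complex.norm_intCast]
        exact_mod_cast (abs_moebius_le_one (n := d))
      have hle : ((N / d : ℕ) : ℝ) * d ≤ N := by exact_mod_cast Nat.div_mul_le_self N d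
      have hMnn : (0:ℝ) ≤ ((N / d : ℕ) : ℝ) := Nat.cast_nonneg _
      have h3 : ((N / d : ℕ) : ℝ) ^ 2 * (d:ℝ) ^ 2 ≤ (N:ℝ) ^ 2 := by
        nlinarith [mul_self_le_mul_self (mul_nonneg hMnn hdR.le) hle]
      calc ‖(μ d : ℂ)‖ * ‖S d (N / d)‖ / (N:ℝ)^2
          ≤ 1 * (((N / d : ℕ):ℝ)^2 * B) / (N:ℝ)^2 := by
            gcongr
            exact hSb d (N / d)
        _ ≤ B * (1 / (d : ℝ) ^ 2) := by
            rw [one_mul, div_le_iff₀ (by positivity), mul_one_div, div_mul_eq_mul_div,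
              le_div_iff₀ (by positivity)]
            nlinarith
    · simp only [hF, if_neg hd, norm_zero]
      positivity
  -- pointwise limits
  have hab : ∀ d : ℕ, Tendsto (fun N => F N d) atTop (nhds (g d)) := by
    intro d
    rcases Nat.eq_zero_or_pos d with rfl | hd0
    · have hg0 : g 0 = 0 := by simp [hg]
      rw [hg0]
      exact Tendsto.congr (fun N => by simp [hF]) tendsto_const_nhds
    · have hdR : (0:ℝ) < d := by exact_mod_cast hd0
      have hdiv : Tendsto (fun N : ℕ => N / d) atTop atTop := by
        refine tendsto_atTop_atTop.2 fun K => ⟨K * d, fun N hN => ?_⟩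
        exact (Nat.le_div_iff_mul_le hd0).2 hN
      have hA : Tendsto (fun N : ℕ => S d (N / d) / ((N / d : ℕ) : ℂ) ^ 2) atTop (nhds c) :=
        (h d hd0).comp hdiv
      have hr : Tendsto (fun N : ℕ => ((N / d : ℕ) : ℝ) / (N : ℝ)) atTop (nhds (1 / (d : ℝ))) := by
        have hlow : Tendsto (fun N : ℕ => 1 / (d : ℝ) - 1 / (N : ℝ)) atTop (nhds (1 / (d : ℝ))) := by
          simpa using (tendsto_const_nhds (x := 1 / (d:ℝ))).sub tendsto_one_div_atTop_nhds_zero_nat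
        refine tendsto_of_tendsto_of_tendsto_of_le_of_le' hlow tendsto_const_nhds ?_ ?_
        · filter_upwards [eventually_ge_atTop 1] with N hN
          have hNR : (0:ℝ) < N := by exact_mod_cast hN
          have keyN : N < d * (N / d) + d := by
            have h1 := Nat.div_add_mod N d
            have h2 := Nat.mod_lt N hd0
            omega
          have key : (N : ℝ) < d * ((N / d : ℕ) : ℝ) + d := by exact_mod_cast keyN
          rw [le_div_iff₀ hNR]
          have expand : (1 / (d:ℝ) - 1 / N) * N = N / d - 1 := by field_simp
          rw [expand, sub_le_iff_le_add, div_le_iff₀ hdR]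
          linarith
        · filter_upwards [eventually_ge_atTop 1] with N hN
          have hNR : (0:ℝ) < N := by exact_mod_cast hN
          rw [div_le_div_iff₀ hNR hdR, one_mul]
          exact_mod_cast Nat.div_mul_le_self N d
      have hrC : Tendsto (fun N : ℕ => ((N / d : ℕ) : ℂ) / (N : ℂ)) atTop (nhds (1 / (d : ℂ))) := by
        have := (Complex.continuous_ofReal.tendsto _).comp hr
        simp only [Function.comp_def] at this
        push_cast at this
        exact this
      have main : Tendsto (fun N : ℕ =>
          (μ d : ℂ) * (((N / d : ℕ) : ℂ) / (N : ℂ)) ^ 2 * (S d (N / d) / ((N / d : ℕ) : ℂ) ^ 2))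
          atTop (nhds (g d)) :=
        (tendsto_const_nhds.mul (hrC.pow 2)).mul hA
      refine main.congr' ?_
      filter_upwards [eventually_ge_atTop d, eventually_ge_atTop 1] with N h1 h2
      have hM1 : 1 ≤ N / d := (Nat.one_le_div_iff hd0).2 h1
      have hmem : d ∈ Finset.Icc 1 N := Finset.mem_Icc.2 ⟨hd0, h1⟩
      simp only [hF, if_pos hmem]
      have hM0 : ((N / d : ℕ) : ℂ) ≠ 0 := Nat.cast_ne_zero.2 (Nat.one_le_iff_ne_zero.1 hM1)
      have hN0 : ((N : ℕ) : ℂ) ≠ 0 := Nat.cast_ne_zero.2 (Nat.one_le_iff_ne_zero.1 h2)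
      field_simp
  -- summable bound
  have hsummable : Summable (fun d : ℕ => B * (1 / (d : ℝ) ^ 2)) :=
    (Real.summable_one_div_nat_pow.2 one_lt_two).mul_left B
  have hsum := tendsto_tsum_of_dominated_convergence hsummable hab
    (Eventually.of_forall hFb)
  -- identify the partial sums
  have heq : ∀ N : ℕ, (∑' d, F N d) =
      (∑ p ∈ (Finset.Icc 1 N ×ˢ Finset.Icc 1 N).filter (fun p => Nat.gcd p.1 p.2 = 1),
          b p) / (N : ℂ) ^ 2 := by
    intro N
    rw [tsum_eq_sum (s := Finset.Icc 1 N) (fun d hd => by simp only [hF]; rw [if_neg hd])]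
    rw [sum_coprime_eq' b N, Finset.sum_div]
    refine Finset.sum_congr rfl fun d hd => ?_
    simp only [hF]
    rw [if_pos hd]
  -- identify the limit
  have hlim : (∑' d, g d) = (6 / (Real.pi : ℂ) ^ 2) * c := by
    have hterm : ∀ d : ℕ, g d = LSeries.term ↗μ 2 d * c := by
      intro d
      rcases Nat.eq_zero_or_pos d with rfl | hd0
      · simp [hg, LSeries.term]
      · have hd0' : d ≠ 0 := hd0.ne'
        rw [hg, LSeries.term_of_ne_zero hd0']
        have : ((d : ℂ) ^ (2 : ℂ)) = (d : ℂ) ^ (2 : ℕ) := by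
          rw [show (2:ℂ) = ((2:ℕ):ℂ) by norm_num, Complex.cpow_natCast]
        rw [this]
        field_simp
    rw [tsum_congr hterm, tsum_mul_right]
    have hre : (1 : ℝ) < (2 : ℂ).re := by norm_num
    have hz := LSeries_zeta_mul_Lseries_moebius (s := 2) hre
    rw [LSeries_zeta_eq_riemannZeta hre, riemannZeta_two] at hz
    have hL : LSeries ↗μ 2 = 6 / (Real.pi : ℂ) ^ 2 := by
      have hpi : ((Real.pi : ℂ)) ^ 2 ≠ 0 :=
        pow_ne_zero _ (Complex.ofReal_ne_zero.2 Real.pi_ne_zero)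
      field_simp at hz
      rw [eq_div_iff hpi]
      linear_combination hz
    rw [show (∑' d, LSeries.term ↗μ 2 d) = LSeries ↗μ 2 from rfl, hL]
  rw [← hlim]
  exact hsum.congr heq


theorem stmt7 (b : ℕ × ℕ → ℂ) (B : ℝ) (hb : ∀ p, ‖b p‖ ≤ B) (c : ℂ)
    (h : ∀ d : ℕ, 1 ≤ d →
      Tendsto (fun N : ℕ =>
          (∑ m ∈ Finset.Icc 1 N, ∑ n ∈ Finset.Icc 1 N, b (d * m, d * n)) / (N : ℂ) ^ 2)
        atTop (nhds c)) :
    Tendsto (fun N : ℕ =>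
        (∑ p ∈ (Finset.Icc 1 N ×ˢ Finset.Icc 1 N).filter (fun p => Nat.gcd p.1 p.2 = 1),
            b p) / (N : ℂ) ^ 2)
      atTop (nhds ((6 / (Real.pi : ℂ) ^ 2) * c)) ∧
    Tendsto (fun N : ℕ =>
        (∑ p ∈ (Finset.Icc 1 N ×ˢ Finset.Icc 1 N).filter (fun p => Nat.gcd p.1 p.2 = 1),
            b p) /
          (((Finset.Icc 1 N ×ˢ Finset.Icc 1 N).filter
              (fun p => Nat.gcd p.1 p.2 = 1)).card : ℂ))
      atTop (nhds c) := by
  have h1 := key_tendsto b B hb c h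
  refine ⟨h1, ?_⟩
  have hconst : ∀ d : ℕ, 1 ≤ d →
      Tendsto (fun N : ℕ =>
          (∑ _m ∈ Finset.Icc 1 N, ∑ _n ∈ Finset.Icc 1 N, (1:ℂ)) / (N : ℂ) ^ 2)
        atTop (nhds 1) := by
    intro d _
    have heq : ∀ᶠ N : ℕ in atTop,
        (∑ _m ∈ Finset.Icc 1 N, ∑ _n ∈ Finset.Icc 1 N, (1:ℂ)) / (N : ℂ) ^ 2 = 1 := by
      filter_upwards [eventually_ge_atTop 1] with N hN
      have hN0 : ((N : ℕ) : ℂ) ≠ 0 := Nat.cast_ne_zero.2 (by omega)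
      simp only [Finset.sum_const, Nat.card_Icc, Nat.add_sub_cancel, nsmul_eq_mul, mul_one]
      rw [← pow_two, div_self (pow_ne_zero _ hN0)]
    exact (tendsto_congr' heq).2 tendsto_const_nhds
  have h2 := key_tendsto (fun _ => (1:ℂ)) 1 (fun p => by norm_num) 1 hconst
  simp only [Finset.sum_const, nsmul_eq_mul, mul_one] at h2
  have hpi0 : (6 / (Real.pi : ℂ) ^ 2) ≠ 0 :=
    div_ne_zero (by norm_num) (pow_ne_zero _ (Complex.ofReal_ne_zero.2 Real.pi_ne_zero))
  have h3 := h1.div h2 hpi0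
  have hval : ((6 / (Real.pi : ℂ) ^ 2) * c) / (6 / (Real.pi : ℂ) ^ 2) = c := by
    rw [mul_comm, mul_div_assoc, div_self hpi0, mul_one]
  rw [hval] at h3
  refine Tendsto.congr' ?_ h3
  filter_upwards [h2.eventually_ne hpi0, eventually_ge_atTop 1] with N hne hN
  have hN0 : ((N : ℕ) : ℂ) ≠ 0 := Nat.cast_ne_zero.2 (by omega)
  have hN2 : ((N : ℕ) : ℂ) ^ 2 ≠ 0 := pow_ne_zero _ hN0
  have hcard : ((((Finset.Icc 1 N ×ˢ Finset.Icc 1 N).filter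
      (fun p => Nat.gcd p.1 p.2 = 1)).card : ℂ)) ≠ 0 := by
    intro h0
    apply hne
    rw [h0, zero_div]
  simp only [Pi.div_apply]
  field_simp
end
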